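/- arXiv:2506.23831 — 7 statements merged into one kernel-verified Lean document; each statement's English description precedes it below -/
import Mathlib

section
/- Let f be holomorphic on the open unit disk 𝔻 and suppose that, for some n ≥ 1, the derivatives f(0) = f'(0) = ⋯ = f^{(n-1)}(0) = 0 and f^{(n)}(0) is a positive real number. Suppose further that f satisfies the Jack condition. Then f maps the interval [0,1) into the reals, with f(x) > 0 for all x ∈ (0,1), and the restriction of f to [0,1) (i.e. the function x ↦ Re f(x)) is strictly increasing and convex on [0,1). -/
open Complex Metric Set

open Function

private lemma hasDerivAt_comp_real {f : ℂ → ℂ} {z f'c : ℂ} (hf : HasDerivAt f f'c z)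
    {c : ℝ → ℂ} {c' : ℂ} {θ : ℝ} (hc : HasDerivAt c c' θ) (hz : c θ = z) :
    HasDerivAt (fun t => f (c t)) (f'c * c') θ := by
  subst hz
  have := (hf.hasFDerivAt.restrictScalars ℝ).comp_hasDerivAt θ hc
  simpa [mul_comm, Function.comp_def] using this

private lemma hasDerivAt_conj_comp {w : ℝ → ℂ} {w' : ℂ} {θ : ℝ} (h : HasDerivAt w w' θ) :
    HasDerivAt (fun t => (starRingEnd ℂ) (w t)) ((starRingEnd ℂ) w') θ := by
  have := Complex.conjCLE.toContinuousLinearMap.hasFDerivAt.comp_hasDerivAt θ h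
  simpa [Function.comp_def] using this

private lemma hasDerivAt_re_comp {w : ℝ → ℂ} {w' : ℂ} {θ : ℝ} (h : HasDerivAt w w' θ) :
    HasDerivAt (fun t => (w t).re) w'.re θ := by
  simpa [Function.comp_def] using Complex.reCLM.hasFDerivAt.comp_hasDerivAt θ h

private lemma hasDerivAt_normSq_comp {w : ℝ → ℂ} {w' : ℂ} {θ : ℝ} (h : HasDerivAt w w' θ) :
    HasDerivAt (fun t => Complex.normSq (w t)) (2 * ((starRingEnd ℂ) (w θ) * w').re) θ := by
  have hre : HasDerivAt (fun t => (w t).re) w'.re θ := hasDerivAt_re_comp h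
  have him : HasDerivAt (fun t => (w t).im) w'.im θ := by
    simpa [Function.comp_def] using Complex.imCLM.hasFDerivAt.comp_hasDerivAt θ h
  have := (hre.mul hre).add (him.mul him)
  have h2 : HasDerivAt (fun t => (w t).re * (w t).re + (w t).im * (w t).im)
      (w'.re * (w θ).re + (w θ).re * w'.re + (w'.im * (w θ).im + (w θ).im * w'.im)) θ := this
  have heq : 2 * ((starRingEnd ℂ) (w θ) * w').re
      = w'.re * (w θ).re + (w θ).re * w'.re + (w'.im * (w θ).im + (w θ).im * w'.im) := by
    rw [Complex.mul_re]; simp; ring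
  rw [heq]
  simpa only [Complex.normSq_apply] using h2

/-- If `ψ` has a global max at `0` and `Ψ` is its derivative, with `Ψ` differentiable at `0`,
then `Ψ' 0 ≤ 0`. -/
private lemma second_deriv_max_nonpos {ψ Ψ : ℝ → ℝ} (hmax : ∀ θ, ψ θ ≤ ψ 0)
    (hψ : ∀ θ, HasDerivAt ψ (Ψ θ) θ) {q : ℝ} (hq : HasDerivAt Ψ q 0) : q ≤ 0 := by
  by_contra hq0
  push_neg at hq0
  have hΨ0 : Ψ 0 = 0 := by
    have hloc : IsLocalMax ψ 0 := Filter.Eventually.of_forall hmax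
    exact hloc.hasDerivAt_eq_zero (hψ 0)
  have hslope : Filter.Tendsto (slope Ψ 0) (nhdsWithin 0 {(0:ℝ)}ᶜ) (nhds q) :=
    (hasDerivAt_iff_tendsto_slope).1 hq
  have hev : ∀ᶠ θ in nhdsWithin 0 {(0:ℝ)}ᶜ, 0 < slope Ψ 0 θ :=
    hslope.eventually (eventually_gt_nhds hq0)
  have hev2 : ∀ᶠ θ in nhdsWithin (0:ℝ) (Ioi 0), 0 < slope Ψ 0 θ :=
    hev.filter_mono (nhdsWithin_mono 0 (fun x hx => by simpa using (ne_of_gt hx)))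
  obtain ⟨δ, hδ, hδ2⟩ := mem_nhdsGT_iff_exists_Ioo_subset.mp hev2
  have hδpos : 0 < δ := hδ
  have hΨpos : ∀ θ ∈ Ioo (0:ℝ) δ, 0 < Ψ θ := by
    intro θ hθ
    have hs := hδ2 hθ
    have hθ0 : (0:ℝ) < θ := hθ.1
    simp only [Set.mem_setOf_eq, slope_def_field, hΨ0, sub_zero] at hs
    have := hs
    have := mul_pos this hθ0
    rwa [div_mul_cancel₀ _ (ne_of_gt hθ0)] at this
  have hmono : StrictMonoOn ψ (Icc (0:ℝ) δ) := by
    apply strictMonoOn_of_deriv_pos (convex_Icc _ _)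
    · exact fun x _ => ((hψ x).continuousAt).continuousWithinAt
    · intro x hx
      rw [interior_Icc] at hx
      rw [(hψ x).deriv]
      exact hΨpos x hx
  have : ψ 0 < ψ δ := hmono ⟨le_refl _, hδpos.le⟩ ⟨hδpos.le, le_refl _⟩ hδpos
  exact absurd (hmax δ) (not_le.mpr this)

/-- One-sided derivative nonnegativity from monotonicity to the right. -/
private lemma deriv_nonneg_of_right_mono {h : ℝ → ℝ} {r b d : ℝ} (hrb : r < b)
    (hd : HasDerivAt h d r) (hm : ∀ y, r < y → y < b → h r ≤ h y) : 0 ≤ d := by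
  have hslope : Filter.Tendsto (slope h r) (nhdsWithin r {r}ᶜ) (nhds d) :=
    (hasDerivAt_iff_tendsto_slope).1 hd
  have hslope2 : Filter.Tendsto (slope h r) (nhdsWithin r (Ioi r)) (nhds d) :=
    hslope.mono_left (nhdsWithin_mono r (fun x hx => by simpa using (ne_of_gt hx)))
  refine ge_of_tendsto hslope2 ?_
  filter_upwards [Ioo_mem_nhdsGT_of_mem ⟨le_refl r, hrb⟩] with y hy
  rw [slope_def_field]
  exact div_nonneg (by linarith [hm y hy.1 hy.2]) (by linarith [hy.1])


/-- **Schwarz–Jack lemma** (Theorem 2.1, first part).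
If `f` is holomorphic on the unit disk, vanishes to order `n ≥ 1` at `0` with
`f⁽ⁿ⁾(0) > 0`, and satisfies the Jack condition `|f(z)| ≤ |f(|z|)|`, then `f` is
real and positive on `(0,1)`, and its restriction to `[0,1)` is strictly
increasing and convex. -/
theorem schwarz_jack (f : ℂ → ℂ) (n : ℕ) (hn : 1 ≤ n)
    (hf : DifferentiableOn ℂ f (ball (0 : ℂ) 1))
    (hvanish : ∀ k < n, iteratedDeriv k f 0 = 0)
    (hpos : (iteratedDeriv n f 0).im = 0 ∧ 0 < (iteratedDeriv n f 0).re)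
    (hJack : ∀ z ∈ ball (0 : ℂ) 1,
      ‖f z‖ ≤ ‖f ((‖z‖ : ℝ) : ℂ)‖) :
    (∀ x : ℝ, x ∈ Ico (0 : ℝ) 1 → (f x).im = 0) ∧
    (∀ x : ℝ, x ∈ Ioo (0 : ℝ) 1 → 0 < (f x).re) ∧
    StrictMonoOn (fun x : ℝ => (f x).re) (Ico (0 : ℝ) 1) ∧
    ConvexOn ℝ (Ico (0 : ℝ) 1) (fun x : ℝ => (f x).re) := by
  obtain ⟨him, hre⟩ := hpos
  have h01 : (0 : ℂ) ∈ ball (0 : ℂ) 1 := by simp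
  have hAN : AnalyticOnNhd ℂ f (ball (0 : ℂ) 1) := hf.analyticOnNhd isOpen_ball
  obtain ⟨p, hp⟩ : AnalyticAt ℂ f 0 := hAN 0 h01
  -- coefficients are Taylor coefficients
  have hcoeff : ∀ k : ℕ, ((Nat.factorial k : ℕ) : ℂ) * p.coeff k = iteratedDeriv k f 0 := by
    intro k
    obtain ⟨r, hr⟩ := hp
    have h1 := hr.factorial_smul (1 : ℂ) k
    rw [iteratedDeriv_eq_iteratedFDeriv]
    rw [← h1]
    simp only [FormalMultilinearSeries.coeff, nsmul_eq_mul, Pi.one_def]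
  -- values of the iterated dslope at 0
  have hgk0 : ∀ k : ℕ, (swap dslope 0)^[k] f 0 = p.coeff k := by
    intro k
    have hk := hp.has_fpower_series_iterate_dslope_fslope k
    have h0 := hk.coeff_zero (fun _ => (1 : ℂ))
    have : (FormalMultilinearSeries.fslope^[k] p).coeff 0 = (swap dslope 0)^[k] f 0 := h0
    rw [← this, FormalMultilinearSeries.coeff_iterate_fslope, zero_add]
  have hf00 : f 0 = 0 := by
    have := hvanish 0 hn
    simpa [iteratedDeriv_zero] using this
  -- the factored function g
  set g : ℂ → ℂ := (swap dslope 0)^[n] f with hg_def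
  have hgd : ∀ k : ℕ, DifferentiableOn ℂ ((swap dslope 0)^[k] f) (ball (0 : ℂ) 1) := by
    intro k
    induction k with
    | zero => exact hf
    | succ k ih =>
      rw [Function.iterate_succ_apply']
      exact (differentiableOn_dslope (isOpen_ball.mem_nhds h01)).mpr ih
  have hfg : ∀ k ≤ n, ∀ z : ℂ, f z = z ^ k * (swap dslope 0)^[k] f z := by
    intro k hk
    induction k with
    | zero => intro z; simp
    | succ k ih =>
      intro z
      have hk' : k ≤ n := Nat.le_of_succ_le hk
      have hk0 : (swap dslope 0)^[k] f 0 = 0 := by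
        rw [hgk0 k]
        have h2 := hcoeff k
        rw [hvanish k hk] at h2
        have : ((Nat.factorial k : ℕ) : ℂ) ≠ 0 := Nat.cast_ne_zero.mpr k.factorial_ne_zero
        exact (mul_eq_zero.mp h2).resolve_left this
      rcases eq_or_ne z 0 with rfl | hz
      · simp [hf00]
      · rw [Function.iterate_succ_apply', swap]
        rw [dslope_of_ne _ hz, slope_def_field, hk0]
        rw [ih hk' z]
        field_simp
        ring
  have hfgn : ∀ z : ℂ, f z = z ^ n * g z := hfg n le_rfl
  -- value of g at 0
  set B : ℝ := (iteratedDeriv n f 0).re / (Nat.factorial n) with hB_def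
  have hB : 0 < B := div_pos hre (by positivity)
  have hg0 : g 0 = (B : ℂ) := by
    rw [hg_def, hgk0 n]
    have h2 := hcoeff n
    have hfac : ((Nat.factorial n : ℕ) : ℂ) ≠ 0 := Nat.cast_ne_zero.mpr n.factorial_ne_zero
    have : p.coeff n = iteratedDeriv n f 0 / ((Nat.factorial n : ℕ) : ℂ) := by
      field_simp [hfac] at h2 ⊢
      linear_combination h2
    have hreal : iteratedDeriv n f 0 = ((iteratedDeriv n f 0).re : ℂ) :=
      Complex.ext rfl (by simp [him])
    rw [this, hreal, hB_def]
    push_cast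
    ring
  -- Jack condition for g
  have hJg : ∀ z ∈ ball (0 : ℂ) 1,
      ‖g z‖ ≤ ‖g ((‖z‖ : ℝ) : ℂ)‖ := by
    intro z hz
    rcases eq_or_ne z 0 with rfl | hz0
    · simp
    · have habs : (0 : ℝ) < ‖z‖ := by
        simpa using norm_pos_iff.mpr hz0
      have hz' : ((‖z‖ : ℝ) : ℂ) ∈ ball (0 : ℂ) 1 := by
        simp only [mem_ball, dist_zero_right, Complex.norm_real, Real.norm_eq_abs,
          abs_of_pos habs]
        simpa [mem_ball, dist_zero_right] using hz
      have h1 := hJack z hz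
      rw [hfgn z, hfgn ((‖z‖ : ℝ) : ℂ)] at h1
      rw [norm_mul, norm_mul, norm_pow, norm_pow] at h1
      have habs2 : ‖((‖z‖ : ℝ) : ℂ)‖ = ‖z‖ := by
        simp [abs_of_pos habs]
      rw [habs2] at h1
      have hpow : (0 : ℝ) < ‖z‖ ^ n := pow_pos habs n
      exact le_of_mul_le_mul_left h1 hpow
  -- maximum modulus monotonicity for g
  have hmaxg : ∀ r : ℝ, r ∈ Ico (0 : ℝ) 1 → ∀ z : ℂ, ‖z‖ ≤ r →
      ‖g z‖ ≤ ‖g (r : ℂ)‖ := by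
    intro r hr z hzr
    rcases eq_or_lt_of_le hr.1 with hr0 | hr0
    · have : z = 0 := by
        have : ‖z‖ ≤ 0 := by rwa [← hr0] at hzr
        exact norm_eq_zero.mp (le_antisymm this (norm_nonneg z))
      rw [this, ← hr0]; simp
    · have hcl : closedBall (0 : ℂ) r ⊆ ball (0 : ℂ) 1 := by
        intro w hw
        simp only [mem_closedBall, dist_zero_right] at hw
        simp only [mem_ball, dist_zero_right]
        exact lt_of_le_of_lt hw hr.2
      have hdc : DiffContOnCl ℂ g (ball (0 : ℂ) r) := by
        apply DifferentiableOn.diffContOnCl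
        rw [closure_ball (0 : ℂ) (ne_of_gt hr0)]
        exact (hgd n).mono hcl
      have hfront : ∀ w ∈ frontier (ball (0 : ℂ) r), ‖g w‖ ≤ ‖g (r : ℂ)‖ := by
        intro w hw
        rw [frontier_ball (0 : ℂ) (ne_of_gt hr0)] at hw
        have hwr : ‖w‖ = r := by
          simpa [mem_sphere_iff_norm] using hw
        have := hJg w (hcl (by simp [mem_closedBall, dist_zero_right, hwr.le]))
        rwa [hwr] at this
      have hzcl : z ∈ closure (ball (0 : ℂ) r) := by
        rw [closure_ball (0 : ℂ) (ne_of_gt hr0)]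
        simpa [mem_closedBall, dist_zero_right] using hzr
      exact Complex.norm_le_of_forall_mem_frontier_norm_le isBounded_ball hdc hfront hzcl
  have hgpos : ∀ r : ℝ, r ∈ Ico (0 : ℝ) 1 → B ≤ ‖g (r : ℂ)‖ := by
    intro r hr
    have := hmaxg r hr 0 (by simpa using hr.1)
    rwa [hg0, Complex.norm_real, Real.norm_eq_abs, abs_of_pos hB] at this
  -- derivatives of f
  set f1 : ℂ → ℂ := deriv f with hf1_def
  set f2 : ℂ → ℂ := deriv f1 with hf2_def
  have hf1d : DifferentiableOn ℂ f1 (ball (0:ℂ) 1) := hAN.deriv.differentiableOn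
  have hD1 : ∀ z ∈ ball (0:ℂ) 1, HasDerivAt f (f1 z) z := fun z hz =>
    ((hf z hz).differentiableAt (isOpen_ball.mem_nhds hz)).hasDerivAt
  have hD2 : ∀ z ∈ ball (0:ℂ) 1, HasDerivAt f1 (f2 z) z := fun z hz =>
    ((hf1d z hz).differentiableAt (isOpen_ball.mem_nhds hz)).hasDerivAt
  have hmem : ∀ r : ℝ, r ∈ Ioo (0:ℝ) 1 → ((r:ℂ) ∈ ball (0:ℂ) 1) := by
    intro r hr
    simp only [mem_ball, dist_zero_right, Complex.norm_real, Real.norm_eq_abs]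
    rw [abs_of_pos hr.1]
    exact hr.2
  -- first and second order conditions from the Jack condition
  have key : ∀ r : ℝ, r ∈ Ioo (0:ℝ) 1 →
      ((starRingEnd ℂ) (f r) * f1 r).im = 0 ∧
      (r^2 * Complex.normSq (f1 r) ≤ r * ((starRingEnd ℂ) (f r) * f1 r).re
        + r^2 * ((starRingEnd ℂ) (f r) * f2 r).re) := by
    intro r hr
    set c : ℝ → ℂ := fun θ => (r:ℂ) * Complex.exp (θ * I) with hc_def
    have hcabs : ∀ θ : ℝ, ‖c θ‖ = r := by
      intro θ
      rw [hc_def]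
      simp only [norm_mul, Complex.norm_real, Real.norm_eq_abs, Complex.norm_exp_ofReal_mul_I, mul_one]
      exact abs_of_pos hr.1
    have hcball : ∀ θ : ℝ, c θ ∈ ball (0:ℂ) 1 := by
      intro θ
      simp only [mem_ball, dist_zero_right, hcabs θ]
      exact hr.2
    have hc0 : c 0 = (r:ℂ) := by simp [hc_def]
    have hcD : ∀ θ : ℝ, HasDerivAt c (c θ * I) θ := by
      intro θ
      have h1 : HasDerivAt (fun t : ℝ => (t:ℂ)) 1 θ := Complex.ofRealCLM.hasDerivAt
      have h2 : HasDerivAt (fun t : ℝ => (t:ℂ) * I) I θ := by simpa using h1.mul_const I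
      have h4 := h2.cexp.const_mul (r:ℂ)
      have : (r:ℂ) * (Complex.exp (θ * I) * I) = c θ * I := by rw [hc_def]; ring
      rw [this] at h4
      exact h4
    have hwD : ∀ θ : ℝ, HasDerivAt (fun t => f (c t)) (f1 (c θ) * (c θ * I)) θ := fun θ =>
      hasDerivAt_comp_real (hD1 (c θ) (hcball θ)) (hcD θ) rfl
    have hψD : ∀ θ : ℝ, HasDerivAt (fun t => Complex.normSq (f (c t)))
        ((fun θ : ℝ => 2 * ((starRingEnd ℂ) (f (c θ)) * (f1 (c θ) * (c θ * I))).re) θ) θ :=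
      fun θ => hasDerivAt_normSq_comp (hwD θ)
    have hmaxψ : ∀ θ : ℝ, Complex.normSq (f (c θ)) ≤ Complex.normSq (f (c 0)) := by
      intro θ
      have h1 := hJack (c θ) (hcball θ)
      rw [hcabs θ, ← hc0] at h1
      rw [Complex.normSq_eq_norm_sq, Complex.normSq_eq_norm_sq]
      exact pow_le_pow_left₀ (norm_nonneg _) h1 2
    have hfirst : 2 * ((starRingEnd ℂ) (f (c 0)) * (f1 (c 0) * (c 0 * I))).re = 0 := by
      have hloc : IsLocalMax (fun t => Complex.normSq (f (c t))) 0 :=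
        Filter.Eventually.of_forall hmaxψ
      exact hloc.hasDerivAt_eq_zero (hψD 0)
    have hIm0 : ((starRingEnd ℂ) (f r) * f1 r).im = 0 := by
      rw [hc0] at hfirst
      have he : (starRingEnd ℂ) (f r) * (f1 r * ((r:ℂ) * I))
          = ((starRingEnd ℂ) (f r) * f1 r) * (r:ℂ) * I := by ring
      rw [he] at hfirst
      rw [Complex.mul_I_re] at hfirst
      have : (((starRingEnd ℂ) (f r) * f1 r) * (r:ℂ)).im
          = ((starRingEnd ℂ) (f r) * f1 r).im * r := by
        rw [Complex.mul_im]
        simp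
      rw [this] at hfirst
      have hrpos := hr.1
      nlinarith [hfirst]
    refine ⟨hIm0, ?_⟩
    -- second order condition
    have hvD : ∀ θ : ℝ, HasDerivAt (fun t => f1 (c t) * (c t * I))
        (f2 (c θ) * (c θ * I) * (c θ * I) + f1 (c θ) * (c θ * I * I)) θ := by
      intro θ
      have h1 : HasDerivAt (fun t => f1 (c t)) (f2 (c θ) * (c θ * I)) θ :=
        hasDerivAt_comp_real (hD2 (c θ) (hcball θ)) (hcD θ) rfl
      have h2 : HasDerivAt (fun t => c t * I) (c θ * I * I) θ := (hcD θ).mul_const I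
      exact h1.mul h2
    have hΨD : HasDerivAt (fun θ : ℝ => 2 * ((starRingEnd ℂ) (f (c θ)) * (f1 (c θ) * (c θ * I))).re)
        (2 * ((starRingEnd ℂ) (f1 (c 0) * (c 0 * I)) * (f1 (c 0) * (c 0 * I))
          + (starRingEnd ℂ) (f (c 0))
            * (f2 (c 0) * (c 0 * I) * (c 0 * I) + f1 (c 0) * (c 0 * I * I))).re) 0 := by
      have h1 := (hasDerivAt_conj_comp (hwD 0)).mul (hvD 0)
      have h2 := hasDerivAt_re_comp h1
      exact h2.const_mul (2:ℝ)
    have hq := second_deriv_max_nonpos hmaxψ hψD hΨD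
    rw [hc0] at hq
    -- algebraic simplification of hq
    have e1 : (starRingEnd ℂ) (f1 (r:ℂ) * ((r:ℂ) * I)) * (f1 (r:ℂ) * ((r:ℂ) * I))
        = ((Complex.normSq (f1 (r:ℂ)) * r^2 : ℝ) : ℂ) := by
      rw [Complex.conj_mul']
      norm_cast
      rw [Complex.sq_norm, Complex.normSq_mul, Complex.normSq_mul, Complex.normSq_ofReal,
        Complex.normSq_I]
      ring
    have e2 : (starRingEnd ℂ) (f (r:ℂ))
          * (f2 (r:ℂ) * ((r:ℂ) * I) * ((r:ℂ) * I) + f1 (r:ℂ) * ((r:ℂ) * I * I))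
        = -(((r:ℂ))^2 * ((starRingEnd ℂ) (f (r:ℂ)) * f2 (r:ℂ)))
          - (r:ℂ) * ((starRingEnd ℂ) (f (r:ℂ)) * f1 (r:ℂ)) := by
      linear_combination ((starRingEnd ℂ) (f (r:ℂ)) * f2 (r:ℂ) * (r:ℂ)^2
        + (starRingEnd ℂ) (f (r:ℂ)) * f1 (r:ℂ) * (r:ℂ)) * Complex.I_mul_I
    rw [e1, e2] at hq
    rw [Complex.add_re, Complex.ofReal_re, Complex.sub_re, Complex.neg_re] at hq
    have e3 : (((r:ℂ))^2 * ((starRingEnd ℂ) (f (r:ℂ)) * f2 (r:ℂ))).re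
        = r^2 * ((starRingEnd ℂ) (f (r:ℂ)) * f2 (r:ℂ)).re := by
      rw [← Complex.ofReal_pow, Complex.re_ofReal_mul]
    have e4 : ((r:ℂ) * ((starRingEnd ℂ) (f (r:ℂ)) * f1 (r:ℂ))).re
        = r * ((starRingEnd ℂ) (f (r:ℂ)) * f1 (r:ℂ)).re := Complex.re_ofReal_mul _ _
    rw [e3, e4] at hq
    linarith
  -- real-line derivatives
  have hF : ∀ r : ℝ, r ∈ Ioo (0:ℝ) 1 → HasDerivAt (fun x : ℝ => f x) (f1 r) r := fun r hr =>
    (hD1 (r:ℂ) (hmem r hr)).comp_ofReal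
  have hfabs : ∀ r : ℝ, r ∈ Ioo (0:ℝ) 1 →
      ‖f r‖ = r^n * ‖g r‖ := by
    intro r hr
    rw [hfgn (r:ℂ), norm_mul, norm_pow, Complex.norm_real, Real.norm_eq_abs, abs_of_pos hr.1]
  have hfpos : ∀ r : ℝ, r ∈ Ioo (0:ℝ) 1 → 0 < ‖f r‖ := by
    intro r hr
    rw [hfabs r hr]
    exact mul_pos (pow_pos hr.1 n) (lt_of_lt_of_le hB (hgpos r ⟨hr.1.le, hr.2⟩))
  -- the normalized function φ
  set N : ℝ → ℝ := fun x => Real.sqrt (Complex.normSq (f x)) with hN_def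
  have hNabs : ∀ x : ℝ, N x = ‖f x‖ := fun x => (Complex.norm_def _).symm
  set φ : ℝ → ℂ := fun x => f x / ((N x : ℝ) : ℂ) with hφ_def
  have hφD : ∀ r ∈ Ioo (0:ℝ) 1, HasDerivAt φ 0 r := by
    intro r hr
    have hNpos : 0 < N r := by rw [hNabs]; exact hfpos r hr
    have hnsq : HasDerivAt (fun x : ℝ => Complex.normSq (f x))
        (2 * ((starRingEnd ℂ) (f r) * f1 r).re) r := hasDerivAt_normSq_comp (hF r hr)
    have hNne : Complex.normSq (f (r:ℂ)) ≠ 0 := by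
      intro h
      have h2 := hfpos r hr
      rw [← Complex.sq_norm] at h
      nlinarith
    have hND : HasDerivAt N (((starRingEnd ℂ) (f r) * f1 r).re / N r) r := by
      have h1 := hnsq.sqrt hNne
      convert h1 using 1
      rw [hN_def]
      field_simp
    have hNC : HasDerivAt (fun x : ℝ => ((N x : ℝ) : ℂ))
        (((((starRingEnd ℂ) (f r) * f1 r).re / N r : ℝ)) : ℂ) r := by
      have := Complex.ofRealCLM.hasFDerivAt.comp_hasDerivAt r hND
      simpa [Function.comp_def] using this
    have hNne' : ((N r : ℝ) : ℂ) ≠ 0 := by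
      exact_mod_cast hNpos.ne'
    have hdiv := (hF r hr).div hNC hNne'
    have hXr : (starRingEnd ℂ) (f r) * f1 r
        = ((((starRingEnd ℂ) (f r) * f1 r).re : ℝ) : ℂ) :=
      Complex.ext rfl (by simpa using (key r hr).1)
    have hNsq : ((N r : ℝ) : ℂ) * ((N r : ℝ) : ℂ) = (starRingEnd ℂ) (f r) * f r := by
      rw [← Complex.ofReal_mul, hN_def]
      have h2 : Real.sqrt (Complex.normSq (f r)) * Real.sqrt (Complex.normSq (f r))
          = Complex.normSq (f r) := Real.mul_self_sqrt (Complex.normSq_nonneg _)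
      rw [h2, ← Complex.mul_conj]
      ring
    have hnum : f1 r * ((N r : ℝ) : ℂ)
        - f r * (((((starRingEnd ℂ) (f r) * f1 r).re / N r : ℝ)) : ℂ) = 0 := by
      rw [Complex.ofReal_div, sub_eq_zero, ← mul_div_assoc, eq_div_iff hNne']
      rw [mul_assoc, hNsq, ← hXr]
      ring
    have h0 : (f1 r * ((N r : ℝ) : ℂ)
        - f r * (((((starRingEnd ℂ) (f r) * f1 r).re / N r : ℝ)) : ℂ)) / ((N r : ℝ) : ℂ)^2
        = 0 := by rw [hnum, zero_div]
    exact h0 ▸ hdiv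
  have hφconst : ∀ r ∈ Ioo (0:ℝ) 1, ∀ s ∈ Ioo (0:ℝ) 1, φ r = φ s := by
    intro r hr s hs
    refine (convex_Ioo (0:ℝ) 1).is_const_of_fderivWithin_eq_zero (𝕜 := ℝ)
      (fun x hx => ((hφD x hx).differentiableAt).differentiableWithinAt) ?_ hr hs
    intro x hx
    rw [fderivWithin_of_isOpen isOpen_Ioo hx]
    have hd := (hφD x hx).hasFDerivAt.fderiv
    rw [hd]
    ext
    simp
  have hhalf : (1/2 : ℝ) ∈ Ioo (0:ℝ) 1 := by norm_num
  haveI hNB : (nhdsWithin (0:ℝ) (Ioo (0:ℝ) 1)).NeBot := by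
    apply mem_closure_iff_nhdsWithin_neBot.mp
    rw [closure_Ioo (by norm_num : (0:ℝ) ≠ 1)]
    exact ⟨le_refl 0, by norm_num⟩
  have hL1 : φ (1/2) = 1 := by
    have hgcont : ContinuousAt (fun x : ℝ => g ((x:ℂ))) 0 := by
      have hd0 : DifferentiableAt ℂ g 0 :=
        ((hgd n) 0 h01).differentiableAt (isOpen_ball.mem_nhds h01)
      have hc0 : ContinuousAt g ((0:ℝ):ℂ) := by
        rw [Complex.ofReal_zero]; exact hd0.continuousAt
      exact hc0.comp Complex.continuous_ofReal.continuousAt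
    have habscont : ContinuousAt (fun x : ℝ => ((‖g (x:ℂ)‖ : ℝ) : ℂ)) 0 :=
      Complex.continuous_ofReal.continuousAt.comp
        (continuous_norm.continuousAt.comp hgcont)
    have hne0 : ((‖g ((0:ℝ):ℂ)‖ : ℝ) : ℂ) ≠ 0 := by
      rw [Complex.ofReal_ne_zero,
        show ((0:ℝ):ℂ) = 0 from Complex.ofReal_zero, hg0, Complex.norm_real, Real.norm_eq_abs, abs_of_pos hB]
      exact hB.ne'
    have hgc : ContinuousAt (fun x : ℝ => g x / ((‖g x‖ : ℝ) : ℂ)) 0 :=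
      hgcont.div habscont hne0
    have hval : g ((0:ℝ):ℂ) / ((‖g ((0:ℝ):ℂ)‖ : ℝ) : ℂ) = 1 := by
      rw [show ((0:ℝ):ℂ) = 0 from Complex.ofReal_zero, hg0, Complex.norm_real, Real.norm_eq_abs, abs_of_pos hB]
      exact div_self (by exact_mod_cast hB.ne')
    have h1 : Filter.Tendsto (fun x : ℝ => g x / ((‖g x‖:ℝ):ℂ))
        (nhdsWithin 0 (Ioo (0:ℝ) 1)) (nhds 1) := by
      rw [← hval]
      exact (hgc.continuousWithinAt).tendsto
    have h2 : ∀ x ∈ Ioo (0:ℝ) 1, φ x = g x / ((‖g x‖:ℝ):ℂ) := by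
      intro x hx
      have hNx : N x = x^n * ‖g x‖ := by rw [hNabs]; exact hfabs x hx
      have hxne : ((x:ℂ))^n ≠ 0 := pow_ne_zero n (by exact_mod_cast hx.1.ne')
      show f x / ((N x : ℝ):ℂ) = _
      rw [hNx, hfgn (x:ℂ)]
      push_cast
      exact mul_div_mul_left _ _ hxne
    have h3 : Filter.Tendsto φ (nhdsWithin 0 (Ioo (0:ℝ) 1)) (nhds 1) := by
      apply h1.congr'
      filter_upwards [self_mem_nhdsWithin] with x hx
      exact (h2 x hx).symm
    have h4 : Filter.Tendsto φ (nhdsWithin 0 (Ioo (0:ℝ) 1)) (nhds (φ (1/2))) := by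
      apply Filter.Tendsto.congr' _ tendsto_const_nhds
      filter_upwards [self_mem_nhdsWithin] with x hx
      exact (hφconst x hx (1/2) hhalf).symm
    exact tendsto_nhds_unique h4 h3
  have hfreal : ∀ r ∈ Ioo (0:ℝ) 1, f r = ((‖f r‖ : ℝ) : ℂ) := by
    intro r hr
    have h1 : φ r = 1 := by rw [hφconst r hr (1/2) hhalf]; exact hL1
    have hNpos : 0 < N r := by rw [hNabs]; exact hfpos r hr
    have hNne' : ((N r : ℝ) : ℂ) ≠ 0 := by exact_mod_cast hNpos.ne'
    have h5 : f r = ((N r : ℝ) : ℂ) := by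
      have h2 : f r / ((N r : ℝ):ℂ) = 1 := h1
      field_simp at h2
      exact h2
    rw [hNabs] at h5
    exact h5
  -- g is real and positive on (0,1)
  have hgreal : ∀ x : ℝ, x ∈ Ioo (0:ℝ) 1 → g x = ((‖g x‖ : ℝ) : ℂ) := by
    intro x hx
    have hxne : ((x:ℂ))^n ≠ 0 := pow_ne_zero n (by exact_mod_cast hx.1.ne')
    have h := (hfgn (x:ℂ)).symm.trans (hfreal x hx)
    rw [hfabs x hx] at h
    push_cast at h
    exact mul_left_cancel₀ hxne h
  -- derivative of g along the real axis has nonnegative real part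
  have hgmono : ∀ x y : ℝ, x ∈ Ioo (0:ℝ) 1 → x < y → y < 1 →
      ‖g x‖ ≤ ‖g y‖ := by
    intro x y hx hxy hy1
    exact hmaxg y ⟨by linarith [hx.1], hy1⟩ (x:ℂ)
      (by rw [Complex.norm_real, Real.norm_eq_abs, abs_of_pos hx.1]; exact hxy.le)
  have hgD : ∀ x : ℝ, x ∈ Ioo (0:ℝ) 1 → HasDerivAt (fun t : ℝ => g t) (deriv g x) x := by
    intro x hx
    exact (((hgd n) _ (hmem x hx)).differentiableAt
      (isOpen_ball.mem_nhds (hmem x hx))).hasDerivAt.comp_ofReal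
  have hgdre : ∀ x : ℝ, x ∈ Ioo (0:ℝ) 1 → 0 ≤ (deriv g x).re := by
    intro x hx
    have hder : HasDerivAt (fun t : ℝ => (g t).re) (deriv g (x:ℂ)).re x :=
      hasDerivAt_re_comp (hgD x hx)
    refine deriv_nonneg_of_right_mono hx.2 hder ?_
    intro y hxy hy1
    have hy : y ∈ Ioo (0:ℝ) 1 := ⟨lt_trans hx.1 hxy, hy1⟩
    have h1 : (g (x:ℝ)).re = ‖g x‖ := by rw [hgreal x hx]; simp
    have h2 : (g (y:ℝ)).re = ‖g y‖ := by rw [hgreal y hy]; simp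
    rw [h1, h2]
    exact hgmono x y hx hxy hy1
  -- derivative identity along the real axis
  have hDeriv_id : ∀ x : ℝ, x ∈ Ioo (0:ℝ) 1 →
      f1 x = (n:ℂ) * ((x:ℂ))^(n-1) * g x + ((x:ℂ))^n * deriv g x := by
    intro x hx
    have hpow : HasDerivAt (fun t : ℝ => ((t:ℂ))^n) ((n:ℂ) * ((x:ℂ))^(n-1)) x :=
      (hasDerivAt_pow n ((x:ℂ))).comp_ofReal
    have hprod := hpow.mul (hgD x hx)
    have heq : (fun t : ℝ => f t) = fun t : ℝ => ((t:ℂ))^n * g t :=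
      funext fun t => hfgn _
    have hFx := hF x hx
    rw [heq] at hFx
    exact hFx.unique hprod
  -- basic real quantities
  have hfre : ∀ x : ℝ, x ∈ Ioo (0:ℝ) 1 → (f x).re = x^n * ‖g x‖ := by
    intro x hx
    rw [hfreal x hx]
    rw [Complex.ofReal_re]
    exact hfabs x hx
  have hf1re_eq : ∀ x : ℝ, x ∈ Ioo (0:ℝ) 1 →
      (f1 x).re = n * x^(n-1) * ‖g x‖ + x^n * (deriv g x).re := by
    intro x hx
    have h := hDeriv_id x hx
    rw [hgreal x hx] at h
    have h2 : f1 x = ((n * x^(n-1) * ‖g x‖ : ℝ):ℂ)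
        + ((x^n : ℝ):ℂ) * deriv g x := by
      rw [h]; push_cast; ring
    rw [h2, Complex.add_re, Complex.re_ofReal_mul, Complex.ofReal_re]
  have hGpos : ∀ x : ℝ, x ∈ Ioo (0:ℝ) 1 → 0 < ‖g x‖ := fun x hx =>
    lt_of_lt_of_le hB (hgpos x ⟨hx.1.le, hx.2⟩)
  have hf1pos : ∀ x : ℝ, x ∈ Ioo (0:ℝ) 1 → 0 < (f1 x).re := by
    intro x hx
    rw [hf1re_eq x hx]
    have h1 : 0 < n * x^(n-1) * ‖g x‖ := by
      apply mul_pos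
      apply mul_pos
      · exact_mod_cast Nat.pos_of_ne_zero (by omega)
      · exact pow_pos hx.1 _
      · exact hGpos x hx
    have h2 : 0 ≤ x^n * (deriv g x).re :=
      mul_nonneg (pow_pos hx.1 n).le (hgdre x hx)
    linarith
  have hxf1 : ∀ x : ℝ, x ∈ Ioo (0:ℝ) 1 → (f x).re ≤ x * (f1 x).re := by
    intro x hx
    rw [hf1re_eq x hx, hfre x hx]
    have h2 : 0 ≤ x^n * (deriv g x).re :=
      mul_nonneg (pow_pos hx.1 n).le (hgdre x hx)
    have h3 : x * (x^(n-1)) = x^n := by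
      rw [← pow_succ']
      congr 1
      omega
    have h4 : (1:ℝ) ≤ (n:ℝ) := by exact_mod_cast hn
    have h5 : 0 < x^n * ‖g x‖ := mul_pos (pow_pos hx.1 n) (hGpos x hx)
    have : x * (n * x^(n-1) * ‖g x‖ + x^n * (deriv g x).re)
        = n * (x^n * ‖g x‖) + x * (x^n * (deriv g x).re) := by
      rw [← h3]; ring
    rw [this]
    nlinarith [mul_nonneg hx.1.le h2]
  -- imaginary part of f1 vanishes, real part of f2 is nonnegative
  have hf1im : ∀ x : ℝ, x ∈ Ioo (0:ℝ) 1 → (f1 x).im = 0 := by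
    intro x hx
    have h1 := (key x hx).1
    rw [hfreal x hx] at h1
    rw [Complex.conj_ofReal] at h1
    rw [Complex.mul_im] at h1
    simp only [Complex.ofReal_re, Complex.ofReal_im, zero_mul, add_zero] at h1
    have := hfpos x hx
    rcases mul_eq_zero.mp h1 with h | h
    · exact absurd h this.ne'
    · exact h
  have hf2re : ∀ x : ℝ, x ∈ Ioo (0:ℝ) 1 → 0 ≤ (f2 x).re := by
    intro x hx
    have h2 := (key x hx).2
    rw [hfreal x hx, Complex.conj_ofReal] at h2
    rw [Complex.re_ofReal_mul, Complex.re_ofReal_mul] at h2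
    have hnsq : Complex.normSq (f1 x) = (f1 x).re^2 := by
      rw [Complex.normSq_apply, hf1im x hx]
      ring
    rw [hnsq] at h2
    have ha : 0 < ‖f x‖ := hfpos x hx
    have hfa : (f x).re = ‖f x‖ := by rw [hfreal x hx]; simp
    have hxx := hxf1 x hx
    rw [hfa] at hxx
    have hf1p := hf1pos x hx
    have hx0 := hx.1
    nlinarith [mul_nonneg (mul_nonneg hx0.le hf1p.le)
      (sub_nonneg.mpr hxx), mul_pos (mul_pos hx0 hx0) ha]
  -- continuity of the real restriction on [0,1)
  have hmem' : ∀ x : ℝ, x ∈ Ico (0:ℝ) 1 → ((x:ℂ) ∈ ball (0:ℂ) 1) := by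
    intro x hx
    simp only [mem_ball, dist_zero_right, Complex.norm_real, Real.norm_eq_abs]
    rw [_root_.abs_of_nonneg hx.1]
    exact hx.2
  have hcont : ContinuousOn (fun x : ℝ => (f x).re) (Ico (0:ℝ) 1) := by
    apply Complex.continuous_re.comp_continuousOn
    exact (hf.continuousOn).comp Complex.continuous_ofReal.continuousOn hmem'
  -- the four conclusions
  refine ⟨?_, ?_, ?_, ?_⟩
  · intro x hx
    rcases eq_or_lt_of_le hx.1 with h0 | h0
    · rw [← h0]
      simp only [Complex.ofReal_zero, hf00, Complex.zero_im]
    · rw [hfreal x ⟨h0, hx.2⟩]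
      simp
  · intro x hx
    have : (f x).re = ‖f x‖ := by rw [hfreal x hx]; simp
    rw [this]
    exact hfpos x hx
  · apply strictMonoOn_of_deriv_pos (convex_Ico (0:ℝ) 1) hcont
    intro x hx
    rw [interior_Ico] at hx
    rw [(hasDerivAt_re_comp (hF x hx)).deriv]
    exact hf1pos x hx
  · apply convexOn_of_hasDerivWithinAt2_nonneg (convex_Ico (0:ℝ) 1) hcont
      (f' := fun x : ℝ => (f1 x).re) (f'' := fun x : ℝ => (f2 x).re)
    · intro x hx
      rw [interior_Ico] at hx
      exact (hasDerivAt_re_comp (hF x hx)).hasDerivWithinAt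
    · intro x hx
      rw [interior_Ico] at hx
      have hD : HasDerivAt (fun t : ℝ => f1 t) (f2 x) x :=
        (hD2 (x:ℂ) (hmem x hx)).comp_ofReal
      exact (hasDerivAt_re_comp hD).hasDerivWithinAt
    · intro x hx
      rw [interior_Ico] at hx
      exact hf2re x hx
end

section
/- Let f be holomorphic on the open unit disk 𝔻 with f(0) = 0, suppose f satisfies the Jack condition, and suppose f(x) is a positive real number for every x ∈ (0,1). Then for all 0 < s < r < 1, one has f(s)/f(r) ≤ s/r, i.e. r·f(s) ≤ s·f(r). -/
open Complex Metric Set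

/-- Inequality (2.3) in the proof of the Schwarz–Jack lemma:
if `f` is holomorphic on the unit disk with `f(0) = 0`, satisfies the Jack
condition, and is real and positive on `(0,1)`, then `f(s)/f(r) ≤ s/r`, i.e.
`r·f(s) ≤ s·f(r)`, for `0 < s < r < 1`. -/
theorem jack_monotone_ratio (f : ℂ → ℂ)
    (hf : DifferentiableOn ℂ f (ball (0 : ℂ) 1))
    (hf0 : f 0 = 0)
    (hJack : ∀ z ∈ ball (0 : ℂ) 1,
      ‖f z‖ ≤ ‖f ((‖z‖ : ℝ) : ℂ)‖)
    (hreal : ∀ x : ℝ, x ∈ Ioo (0 : ℝ) 1 → (f x).im = 0 ∧ 0 < (f x).re) :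
    ∀ s r : ℝ, 0 < s → s < r → r < 1 →
      r * (f s).re ≤ s * (f r).re := by
  intro s r hs hsr hr1
  have hr : (0:ℝ) < r := hs.trans hsr
  have hrI : r ∈ Ioo (0:ℝ) 1 := ⟨hr, hr1⟩
  have hsI : s ∈ Ioo (0:ℝ) 1 := ⟨hs, hsr.trans hr1⟩
  obtain ⟨hrim, hrre⟩ := hreal r hrI
  obtain ⟨hsim, hsre⟩ := hreal s hsI
  have hfr : f r = ((f r).re : ℂ) := by
    exact Complex.ext (Complex.ofReal_re _).symm (by simp [hrim])
  have habsr : ‖f r‖ = (f r).re := by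
    rw [hfr, Complex.norm_real, Real.norm_eq_abs, abs_of_pos hrre]; simp
  have habss : ‖f s‖ = (f s).re := by
    have hfs : f s = ((f s).re : ℂ) :=
      Complex.ext (Complex.ofReal_re _).symm (by simp [hsim])
    rw [hfs, Complex.norm_real, Real.norm_eq_abs, abs_of_pos hsre]; simp
  -- subset facts
  have hsub : closedBall (0:ℂ) r ⊆ ball (0:ℂ) 1 :=
    closedBall_subset_ball (by exact_mod_cast hr1)
  -- maximum modulus: |f z| ≤ (f r).re on the closed ball of radius r
  have hmax : ∀ z ∈ closedBall (0:ℂ) r, ‖f z‖ ≤ (f r).re := by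
    intro z hz
    have hd : DiffContOnCl ℂ f (ball (0:ℂ) r) := by
      refine DifferentiableOn.diffContOnCl ?_
      rw [closure_ball (0:ℂ) hr.ne']
      exact hf.mono hsub
    have := Complex.norm_le_of_forall_mem_frontier_norm_le isBounded_ball hd
      (C := (f r).re) ?_ (z := z) ?_
    · exact this
    · intro w hw
      rw [frontier_ball (0:ℂ) hr.ne'] at hw
      have hwabs : ‖w‖ = r := by
        simpa [Complex.norm_def] using mem_sphere_zero_iff_norm.mp hw
      have hw1 : w ∈ ball (0:ℂ) 1 := by
        rw [mem_ball_zero_iff]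
        simpa [Complex.norm_def] using hwabs.trans_lt hr1
      have := hJack w hw1
      rw [hwabs, habsr] at this
      simpa [Complex.norm_def] using this
    · rwa [closure_ball (0:ℂ) hr.ne']
  -- Schwarz lemma step, for each ε > 0
  have key : ∀ ε : ℝ, 0 < ε → ‖f s‖ ≤ ((f r).re + ε) / r * s := by
    intro ε hε
    have hmaps : MapsTo f (ball (0:ℂ) r) (ball (f 0) ((f r).re + ε)) := by
      intro z hz
      rw [hf0, mem_ball_zero_iff]
      calc ‖f z‖ ≤ (f r).re := hmax z (ball_subset_closedBall hz)
        _ < (f r).re + ε := by linarith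
    have hsball : (s:ℂ) ∈ ball (0:ℂ) r := by
      rw [mem_ball_zero_iff]
      simpa [abs_of_pos hs] using hsr
    have := Complex.dist_le_div_mul_dist_of_mapsTo_ball
      (hf.mono (ball_subset_ball (le_of_lt (by exact_mod_cast hr1)))) (hmaps.mono_right ball_subset_closedBall) hsball
    rw [hf0, dist_zero_right, dist_zero_right] at this
    have hns : ‖(s:ℂ)‖ = s := by
      simp [abs_of_pos hs]
    rw [hns] at this
    simpa [Complex.norm_def] using this
  -- pass to the limit ε → 0
  rw [← habss]
  refine le_of_forall_pos_le_add ?_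
  intro δ hδ
  have hε : (0:ℝ) < δ / s := div_pos hδ hs
  have h := key (δ / s) hε
  have : r * ‖f s‖ ≤ ((f r).re + δ / s) * s := by
    have := mul_le_mul_of_nonneg_left h hr.le
    calc r * ‖f s‖ ≤ r * (((f r).re + δ / s) / r * s) := this
      _ = ((f r).re + δ / s) * s := by field_simp
  calc r * ‖f s‖ ≤ ((f r).re + δ / s) * s := this
    _ = s * (f r).re + δ := by
        rw [add_mul, div_mul_cancel₀ _ hs.ne']; ring
end

section
/- Let f be holomorphic on the open unit disk 𝔻 with f(0) = 0, suppose f satisfies the Jack condition, and suppose f(x) is a positive real number for every x ∈ (0,1). Then for all 0 < s < r < 1, the derivative f'(s) is a real number and satisfies f'(s) ≤ (f(r) − f(s))/(r − s). -/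
open Complex Metric Set

set_option maxHeartbeats 1000000 in
/-- The derivative estimate in the proof of the Schwarz–Jack lemma:
if `f` is holomorphic on the unit disk with `f(0) = 0`, satisfies the Jack
condition, and is real and positive on `(0,1)`, then for `0 < s < r < 1` the
derivative `f'(s)` is real and `f'(s) ≤ (f(r) − f(s))/(r − s)`. -/
theorem jack_deriv_bound (f : ℂ → ℂ)
    (hf : DifferentiableOn ℂ f (ball (0 : ℂ) 1))
    (hf0 : f 0 = 0)
    (hJack : ∀ z ∈ ball (0 : ℂ) 1,
      ‖f z‖ ≤ ‖f ((‖z‖ : ℝ) : ℂ)‖)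
    (hreal : ∀ x : ℝ, x ∈ Ioo (0 : ℝ) 1 → (f x).im = 0 ∧ 0 < (f x).re) :
    ∀ s r : ℝ, 0 < s → s < r → r < 1 →
      (deriv f (s : ℂ)).im = 0 ∧
      (deriv f (s : ℂ)).re ≤ ((f r).re - (f s).re) / (r - s) := by
  intro s r hs0 hsr hr1
  have hr0 : 0 < r := hs0.trans hsr
  have hs1 : s < 1 := hsr.trans hr1
  have hsball : (s : ℂ) ∈ ball (0 : ℂ) 1 := by
    simp only [mem_ball_zero_iff, Complex.norm_real, Real.norm_eq_abs]
    rw [abs_of_pos hs0]; exact hs1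
  have hrball : (r : ℂ) ∈ ball (0 : ℂ) 1 := by
    simp only [mem_ball_zero_iff, Complex.norm_real, Real.norm_eq_abs]
    rw [abs_of_pos hr0]; exact hr1
  set c : ℝ := (f s).re with hc
  set M : ℝ := (f r).re with hM
  obtain ⟨hfs_im, hc0⟩ := hreal s ⟨hs0, hs1⟩
  obtain ⟨hfr_im, hM0⟩ := hreal r ⟨hr0, hr1⟩
  have hfs : f s = (c : ℂ) := Complex.ext rfl (by simp [hfs_im])
  have hfr : f r = (M : ℂ) := Complex.ext rfl (by simp [hfr_im])
  have hdiff : DifferentiableAt ℂ f s := hf.differentiableAt (isOpen_ball.mem_nhds hsball)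
  have hd : HasDerivAt f (deriv f s) s := hdiff.hasDerivAt
  -- Part 1: the derivative is real
  have him : (deriv f (s : ℂ)).im = 0 := by
    have hg : HasDerivAt (fun z : ℂ => -(Complex.I * f z)) (-(Complex.I * deriv f s)) (s : ℂ) :=
      (hd.const_mul Complex.I).neg
    have hgr := hg.real_of_complex
    have heq : (fun x : ℝ => (-(Complex.I * f x)).re) =ᶠ[nhds s] (fun _ => (0 : ℝ)) := by
      filter_upwards [Ioo_mem_nhds hs0 hs1] with x hx
      have h1 := (hreal x hx).1
      simp [Complex.neg_re, Complex.mul_re, h1]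
    have h0 : HasDerivAt (fun _ : ℝ => (0 : ℝ)) ((-(Complex.I * deriv f s)).re) s :=
      hgr.congr_of_eventuallyEq heq.symm
    have h1 := h0.unique (hasDerivAt_const s 0)
    simpa [Complex.neg_re, Complex.mul_re] using h1
  refine ⟨him, ?_⟩
  -- Part 2
  -- Maximum modulus: |f| ≤ M on the closed ball of radius r
  have habsfr : ‖f ((r : ℝ) : ℂ)‖ = M := by
    rw [hfr, Complex.norm_real, Real.norm_eq_abs, abs_of_pos hM0]
  have hbound : ∀ z ∈ closedBall (0 : ℂ) r, ‖f z‖ ≤ M := by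
    have hcl : closure (ball (0 : ℂ) r) = closedBall 0 r := closure_ball _ hr0.ne'
    have hfront : frontier (ball (0 : ℂ) r) = sphere 0 r := frontier_ball _ hr0.ne'
    have hsub : closedBall (0 : ℂ) r ⊆ ball (0 : ℂ) 1 := closedBall_subset_ball hr1
    intro z hz
    have hdc : DiffContOnCl ℂ f (ball (0 : ℂ) r) :=
      DifferentiableOn.diffContOnCl (hf.mono (by rw [hcl]; exact hsub))
    have := Complex.norm_le_of_forall_mem_frontier_norm_le isBounded_ball hdc
      (C := M) ?_ (by rw [hcl]; exact hz)
    · exact this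
    · intro w hw
      rw [hfront, mem_sphere_zero_iff_norm] at hw
      have hwz : ‖w‖ = r := hw
      have hw1 : w ∈ ball (0 : ℂ) 1 := by
        rw [mem_ball_zero_iff, hw]; exact hr1
      have := hJack w hw1
      rw [hwz, habsfr] at this
      exact this
  -- Schwarz lemma at 0 : c * r ≤ M * s
  have hsmem : (s : ℂ) ∈ ball (0 : ℂ) r := by
    simp only [mem_ball_zero_iff, Complex.norm_real, Real.norm_eq_abs]
    rw [abs_of_pos hs0]; exact hsr
  have habsfs : ‖f s‖ = c := by rw [hfs, Complex.norm_real, Real.norm_eq_abs, abs_of_pos hc0]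
  have hcrMs : c * r ≤ M * s := by
    apply le_of_forall_sub_le
    intro ε hε
    have hmaps : MapsTo f (ball (0 : ℂ) r) (ball (f 0) (M + ε / r)) := by
      intro z hz
      rw [hf0, mem_ball_zero_iff]
      have := hbound z (ball_subset_closedBall hz)
      have hεr : 0 < ε / r := div_pos hε hr0
      calc ‖f z‖ = ‖f z‖ := rfl
        _ ≤ M := this
        _ < M + ε / r := by linarith
    have hdball : DifferentiableOn ℂ f (ball (0 : ℂ) r) := hf.mono (ball_subset_ball hr1.le)
    have hS := Complex.dist_le_div_mul_dist_of_mapsTo_ball hdball (hmaps.mono_right ball_subset_closedBall) hsmem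
    rw [hf0] at hS
    have h1 : dist (f s) 0 = c := by rw [dist_zero_right, habsfs]
    have h2 : dist ((s : ℂ)) 0 = s := by
      rw [dist_zero_right, Complex.norm_real, Real.norm_eq_abs, abs_of_pos hs0]
    rw [h1, h2] at hS
    -- hS : c ≤ (M + ε / r) / r * s
    have : c * r ≤ (M + ε / r) * s := by
      rw [div_mul_eq_mul_div] at hS
      calc c * r ≤ ((M + ε / r) * s / r) * r := by
            exact mul_le_mul_of_nonneg_right hS hr0.le
        _ = (M + ε / r) * s := by field_simp
    have hdiv : ε / r * s ≤ ε := by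
      rw [div_mul_eq_mul_div, div_le_iff₀ hr0]
      nlinarith
    nlinarith
  have hcM : c < M := by nlinarith
  have hM2c2 : (0 : ℝ) < M ^ 2 - c ^ 2 := by nlinarith
  have hr2s2 : (0 : ℝ) < r ^ 2 - s ^ 2 := by nlinarith
  -- The Möbius maps
  set φ : ℂ → ℂ := fun z => (r : ℂ) * ((r : ℂ) * z + (s : ℂ)) / ((r : ℂ) + (s : ℂ) * z)
    with hφdef
  set ψ : ℂ → ℂ := fun w => (M : ℂ) * (w - (c : ℂ)) / (((M ^ 2 : ℝ) : ℂ) - (c : ℂ) * w)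
    with hψdef
  set F : ℂ → ℂ := fun z => ψ (f (φ z)) with hFdef
  have hrC : (r : ℂ) ≠ 0 := by exact_mod_cast hr0.ne'
  have hden1 : ∀ z ∈ ball (0 : ℂ) 1, (r : ℂ) + (s : ℂ) * z ≠ 0 := by
    intro z hz h
    have h2 : (r : ℂ) = -((s : ℂ) * z) := by linear_combination h
    have h3 := congrArg norm h2
    rw [norm_neg, norm_mul, Complex.norm_real, Real.norm_eq_abs, Complex.norm_real, Real.norm_eq_abs,
      abs_of_pos hr0, abs_of_pos hs0] at h3
    have hz1 : ‖z‖ < 1 := by rwa [mem_ball_zero_iff] at hz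
    nlinarith [norm_nonneg z]
  have hden2 : ∀ w : ℂ, ‖w‖ ≤ M → ((M ^ 2 : ℝ) : ℂ) - (c : ℂ) * w ≠ 0 := by
    intro w hw h
    have h2 : ((M ^ 2 : ℝ) : ℂ) = (c : ℂ) * w := by linear_combination h
    have h3 := congrArg norm h2
    rw [norm_mul, Complex.norm_real, Real.norm_eq_abs, Complex.norm_real, Real.norm_eq_abs, abs_of_pos hc0,
      abs_of_pos (by positivity : (0:ℝ) < M ^ 2)] at h3
    nlinarith [norm_nonneg w]
  have hsq : ∀ z : ℂ, ‖z‖ < 1 → z.re ^ 2 + z.im ^ 2 < 1 := by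
    intro z hz
    have h1 := Complex.sq_norm z
    rw [Complex.normSq_apply] at h1
    nlinarith [norm_nonneg z]
  -- φ maps the unit ball into ball 0 r
  have hφmaps : MapsTo φ (ball (0 : ℂ) 1) (ball (0 : ℂ) r) := by
    intro z hz
    have hz1 : ‖z‖ < 1 := by rwa [mem_ball_zero_iff] at hz
    have hz2 := hsq z hz1
    have hlt : Complex.normSq ((r : ℂ) * z + (s : ℂ)) <
        Complex.normSq ((r : ℂ) + (s : ℂ) * z) := by
      simp only [Complex.normSq_apply, Complex.add_re, Complex.add_im, Complex.mul_re,
        Complex.mul_im, Complex.ofReal_re, Complex.ofReal_im]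
      ring_nf
      nlinarith [mul_pos hr2s2 (sub_pos.2 hz2)]
    have habslt : ‖(r : ℂ) * z + (s : ℂ)‖ <
        ‖(r : ℂ) + (s : ℂ) * z‖ := by
      rw [Complex.norm_def, Complex.norm_def]
      exact Real.sqrt_lt_sqrt (Complex.normSq_nonneg _) hlt
    have hBpos : 0 < ‖(r : ℂ) + (s : ℂ) * z‖ :=
      (norm_pos_iff.mpr (hden1 z hz))
    rw [mem_ball_zero_iff, hφdef]
    simp only [norm_div, norm_mul, Complex.norm_real, Real.norm_eq_abs, abs_of_pos hr0]
    rw [div_lt_iff₀ hBpos]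
    exact mul_lt_mul_of_pos_left habslt hr0
  -- φ 0 = s
  have hφ0 : φ 0 = (s : ℂ) := by
    rw [hφdef]
    simp only [mul_zero, add_zero, zero_add]
    field_simp
  -- ψ maps the closed ball of radius M into the closed unit ball
  have hψmaps : ∀ w : ℂ, ‖w‖ ≤ M → ‖ψ w‖ ≤ 1 := by
    intro w hw
    have hwsq : w.re ^ 2 + w.im ^ 2 ≤ M ^ 2 := by
      have h1 := Complex.sq_norm w
      rw [Complex.normSq_apply] at h1
      nlinarith [norm_nonneg w]
    have hne := hden2 w hw
    have hBpos : 0 < ‖((M ^ 2 : ℝ) : ℂ) - (c : ℂ) * w‖ := norm_pos_iff.mpr hne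
    have hle : Complex.normSq ((M : ℂ) * (w - (c : ℂ))) ≤
        Complex.normSq (((M ^ 2 : ℝ) : ℂ) - (c : ℂ) * w) := by
      simp only [Complex.normSq_apply, Complex.sub_re, Complex.sub_im, Complex.mul_re,
        Complex.mul_im, Complex.ofReal_re, Complex.ofReal_im]
      ring_nf
      nlinarith [mul_nonneg hM2c2.le (sub_nonneg.2 hwsq)]
    have habsle : ‖(M : ℂ) * (w - (c : ℂ))‖ ≤
        ‖((M ^ 2 : ℝ) : ℂ) - (c : ℂ) * w‖ := by
      rw [Complex.norm_def, Complex.norm_def]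
      exact Real.sqrt_le_sqrt hle
    rw [hψdef]
    simp only [norm_div]
    rw [div_le_one hBpos]
    exact habsle
  -- F is differentiable on the unit ball
  have hφdiffAt : ∀ z ∈ ball (0 : ℂ) 1, DifferentiableAt ℂ φ z := by
    intro z hz
    rw [hφdef]
    exact DifferentiableAt.div (by fun_prop) (by fun_prop) (hden1 z hz)
  have hfφdiffAt : ∀ z ∈ ball (0 : ℂ) 1, DifferentiableAt ℂ (fun z => f (φ z)) z := by
    intro z hz
    have hmem : φ z ∈ ball (0 : ℂ) r := hφmaps hz
    have hfz : DifferentiableAt ℂ f (φ z) :=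
      hf.differentiableAt (isOpen_ball.mem_nhds (ball_subset_ball hr1.le hmem))
    exact hfz.comp z (hφdiffAt z hz)
  have hFdiff : DifferentiableOn ℂ F (ball (0 : ℂ) 1) := by
    intro z hz
    have hcomp := hfφdiffAt z hz
    have hne : ((M ^ 2 : ℝ) : ℂ) - (c : ℂ) * f (φ z) ≠ 0 :=
      hden2 _ (hbound _ (ball_subset_closedBall (hφmaps hz)))
    have : DifferentiableAt ℂ F z := by
      rw [hFdef, hψdef]
      exact DifferentiableAt.div ((hcomp.sub_const _).const_mul _)
        ((hcomp.const_mul _).const_sub _) hne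
    exact this.differentiableWithinAt
  -- F 0 = 0
  have hF0 : F 0 = 0 := by
    rw [hFdef]
    simp only [hφ0, hfs, hψdef, sub_self, mul_zero, zero_div]
  -- F maps the unit ball into small balls around 0
  have hFle : ∀ z ∈ ball (0 : ℂ) 1, ‖F z‖ ≤ 1 := by
    intro z hz
    exact hψmaps _ (hbound _ (ball_subset_closedBall (hφmaps hz)))
  -- Schwarz: |deriv F 0| ≤ 1
  have habsF : ‖deriv F 0‖ ≤ 1 := by
    apply le_of_forall_sub_le
    intro ε hε
    have hmaps : MapsTo F (ball (0 : ℂ) 1) (ball (F 0) (1 + ε)) := by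
      intro z hz
      rw [hF0, mem_ball_zero_iff]
      calc ‖F z‖ = ‖F z‖ := rfl
        _ ≤ 1 := hFle z hz
        _ < 1 + ε := by linarith
    have := Complex.norm_deriv_le_div_of_mapsTo_ball hFdiff (hmaps.mono_right ball_subset_closedBall) one_pos
    rw [div_one] at this
    linarith
  -- compute deriv F 0
  have hφd : HasDerivAt φ ((((r ^ 2 - s ^ 2) / r : ℝ)) : ℂ) 0 := by
    have h1 : HasDerivAt (fun z : ℂ => (r : ℂ) * ((r : ℂ) * z + (s : ℂ)))
        ((r : ℂ) * (r : ℂ)) 0 := by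
      simpa using (((hasDerivAt_id (0 : ℂ)).const_mul (r : ℂ)).add_const ((s : ℂ))).const_mul (r : ℂ)
    have h2 : HasDerivAt (fun z : ℂ => (r : ℂ) + (s : ℂ) * z) ((s : ℂ)) 0 := by
      simpa using ((hasDerivAt_id (0 : ℂ)).const_mul ((s : ℂ))).const_add ((r : ℂ))
    have h0 : (r : ℂ) + (s : ℂ) * 0 ≠ 0 := by
      rw [mul_zero, add_zero]; exact hrC
    have h3 := h1.div h2 h0
    rw [hφdef]
    refine h3.congr_deriv ?_
    push_cast
    field_simp
    ring
  have hψd : HasDerivAt ψ (((M / (M ^ 2 - c ^ 2) : ℝ)) : ℂ) ((c : ℝ) : ℂ) := by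
    have h1 : HasDerivAt (fun w : ℂ => (M : ℂ) * (w - (c : ℂ))) ((M : ℂ)) ((c : ℝ) : ℂ) := by
      simpa only [mul_one, id_eq] using
        ((hasDerivAt_id ((c : ℝ) : ℂ)).sub_const ((c : ℂ))).const_mul ((M : ℂ))
    have h2 : HasDerivAt (fun w : ℂ => ((M ^ 2 : ℝ) : ℂ) - (c : ℂ) * w) (-(c : ℂ)) ((c : ℝ) : ℂ) := by
      simpa only [mul_one, id_eq] using
        ((hasDerivAt_id ((c : ℝ) : ℂ)).const_mul ((c : ℂ))).const_sub (((M ^ 2 : ℝ)) : ℂ)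
    have h0 : ((M ^ 2 : ℝ) : ℂ) - (c : ℂ) * ((c : ℝ) : ℂ) ≠ 0 := by
      have : ‖((c : ℝ) : ℂ)‖ ≤ M := by
        rw [Complex.norm_real, Real.norm_eq_abs, abs_of_pos hc0]; exact hcM.le
      exact hden2 _ this
    have h3 := h1.div h2 h0
    rw [hψdef]
    refine h3.congr_deriv ?_
    have hne2 : (M ^ 2 - c ^ 2 : ℝ) ≠ 0 := hM2c2.ne'
    have hneC : ((M : ℂ)) ^ 2 - ((c : ℂ)) ^ 2 ≠ 0 := by
      have : (((M ^ 2 - c ^ 2 : ℝ)) : ℂ) ≠ 0 := by exact_mod_cast hne2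
      push_cast at this
      convert this using 1
    have hcc : ((M : ℂ)) ^ 2 - (c : ℂ) * (c : ℂ) ≠ 0 := by
      have : ((c : ℂ)) * c = (c : ℂ) ^ 2 := by ring
      rw [this]; exact hneC
    push_cast
    field_simp
    ring
  have hψd' : HasDerivAt ψ (((M / (M ^ 2 - c ^ 2) : ℝ)) : ℂ) (f (φ 0)) := by
    rw [hφ0, hfs]; exact hψd
  have hfd' : HasDerivAt f (deriv f s) (φ 0) := by rw [hφ0]; exact hd
  have hFd : HasDerivAt F
      ((((M / (M ^ 2 - c ^ 2) : ℝ)) : ℂ) * (deriv f s * (((r ^ 2 - s ^ 2) / r : ℝ) : ℂ))) 0 :=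
    by have := hψd'.comp 0 (hfd'.comp 0 hφd); exact this
  have hderivF : deriv F 0 =
      (((M / (M ^ 2 - c ^ 2) : ℝ)) : ℂ) * (deriv f s * (((r ^ 2 - s ^ 2) / r : ℝ) : ℂ)) :=
    hFd.deriv
  set A : ℝ := ‖deriv f s‖ with hA
  have hQ : M / (M ^ 2 - c ^ 2) * (A * ((r ^ 2 - s ^ 2) / r)) ≤ 1 := by
    have h := habsF
    rw [hderivF] at h
    rw [norm_mul, norm_mul, Complex.norm_real, Real.norm_eq_abs, Complex.norm_real, Real.norm_eq_abs,
      abs_of_pos (by positivity : (0:ℝ) < M / (M ^ 2 - c ^ 2)),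
      abs_of_pos (by positivity : (0:ℝ) < (r ^ 2 - s ^ 2) / r)] at h
    exact h
  -- final arithmetic
  have hQ' : M * (A * (r ^ 2 - s ^ 2)) ≤ (M ^ 2 - c ^ 2) * r := by
    have hpos : (0 : ℝ) < (M ^ 2 - c ^ 2) * r := mul_pos hM2c2 hr0
    have h2 := mul_le_mul_of_nonneg_left hQ hpos.le
    calc M * (A * (r ^ 2 - s ^ 2))
        = (M ^ 2 - c ^ 2) * r * (M / (M ^ 2 - c ^ 2) * (A * ((r ^ 2 - s ^ 2) / r))) := by
          field_simp
      _ ≤ (M ^ 2 - c ^ 2) * r * 1 := h2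
      _ = (M ^ 2 - c ^ 2) * r := mul_one _
  have hA0 : 0 ≤ A := norm_nonneg _
  have hfinal : A ≤ (M - c) / (r - s) := by
    rw [le_div_iff₀ (by linarith : (0:ℝ) < r - s)]
    have h3 : (M + c) * r ≤ M * (r + s) := by nlinarith
    have h4 : (M - c) * ((M + c) * r) ≤ (M - c) * (M * (r + s)) :=
      mul_le_mul_of_nonneg_left h3 (by linarith)
    nlinarith [mul_pos hM0 (by linarith : (0:ℝ) < r + s)]
  calc (deriv f (s : ℂ)).re ≤ A := Complex.re_le_norm _
    _ ≤ (M - c) / (r - s) := hfinal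
end

section
/- Let Ω be a simply connected, proper subdomain of ℂ containing 0, and let f be a normalized conformal mapping of 𝔻 onto Ω. If f(conj(z)) = conj(f(z)) for all z ∈ 𝔻 and, for each r ∈ (0,1), the map θ ↦ |f(r·e^{iθ})| is decreasing (antitone) on [0, π], then Ω is circularly symmetric. -/
open Complex Metric Set

/-- A plane domain `Ω` is circularly symmetric (about `0`) if its intersection with
each circle centred at the origin is empty, the whole circle, or a subarc centred on
the positive real axis: for every `r > 0` and angles `θ, θ'` with `|θ'| ≤ |θ| ≤ π`,
if `r·e^{iθ} ∈ Ω` then `r·e^{iθ'} ∈ Ω`. -/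
def CircularlySymmetric (Ω : Set ℂ) : Prop :=
  ∀ r θ θ' : ℝ, 0 < r → |θ'| ≤ |θ| → |θ| ≤ Real.pi →
    (r : ℂ) * Complex.exp ((θ : ℂ) * Complex.I) ∈ Ω →
    (r : ℂ) * Complex.exp ((θ' : ℂ) * Complex.I) ∈ Ω

lemma conj_ofReal_mul_exp (a s : ℝ) :
    (starRingEnd ℂ) ((a : ℂ) * Complex.exp ((s : ℂ) * Complex.I)) =
      (a : ℂ) * Complex.exp (((-s : ℝ) : ℂ) * Complex.I) := by
  rw [map_mul, Complex.conj_ofReal, ← Complex.exp_conj, map_mul, Complex.conj_ofReal,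
    Complex.conj_I]
  push_cast
  ring_nf

lemma abs_ofReal_mul_exp (a s : ℝ) (ha : 0 ≤ a) :
    ‖(a : ℂ) * Complex.exp ((s : ℂ) * Complex.I)‖ = a := by
  rw [norm_mul, Complex.norm_real, Real.norm_eq_abs, Complex.norm_exp_ofReal_mul_I, mul_one, _root_.abs_of_nonneg ha]

lemma re_ofReal_mul_exp (a s : ℝ) :
    ((a : ℂ) * Complex.exp ((s : ℂ) * Complex.I)).re = a * Real.cos s := by
  rw [Complex.re_ofReal_mul, Complex.exp_ofReal_mul_I_re]

lemma im_ofReal_mul_exp (a s : ℝ) :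
    ((a : ℂ) * Complex.exp ((s : ℂ) * Complex.I)).im = a * Real.sin s := by
  rw [Complex.im_ofReal_mul, Complex.exp_ofReal_mul_I_im]

set_option maxHeartbeats 2000000 in
/-- Theorem 3.1, (ii) ⇒ (i): if the normalized Riemann map `f` of a simply connected,
proper subdomain `Ω ∋ 0` commutes with conjugation and `θ ↦ |f(r e^{iθ})|` is
decreasing on `[0, π]` for each `r ∈ (0,1)`, then `Ω` is circularly symmetric. -/
theorem symmetric_decreasing_implies_circsym
    (Ω : Set ℂ) (hΩopen : IsOpen Ω) (hΩconn : IsConnected Ω)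
    (hΩsc : SimplyConnectedSpace Ω) (hΩne : Ω ≠ univ) (hΩ0 : (0 : ℂ) ∈ Ω)
    (f : ℂ → ℂ) (hf : DifferentiableOn ℂ f (ball (0 : ℂ) 1))
    (hinj : InjOn f (ball (0 : ℂ) 1)) (himg : f '' ball (0 : ℂ) 1 = Ω)
    (hf0 : f 0 = 0) (hf'0 : (deriv f 0).im = 0 ∧ 0 < (deriv f 0).re)
    (hconj : ∀ z ∈ ball (0 : ℂ) 1, f (starRingEnd ℂ z) = starRingEnd ℂ (f z))
    (hdecr : ∀ r : ℝ, r ∈ Ioo (0 : ℝ) 1 →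
      AntitoneOn (fun θ : ℝ => ‖f ((r : ℂ) * Complex.exp ((θ : ℂ) * Complex.I))‖)
        (Icc (0 : ℝ) Real.pi)) :
    CircularlySymmetric Ω := by
  have hcont : ContinuousOn f (ball (0 : ℂ) 1) := hf.continuousOn
  -- Ω is symmetric w.r.t. conjugation
  have hsym : ∀ z ∈ Ω, (starRingEnd ℂ) z ∈ Ω := by
    intro z hz
    rw [← himg] at hz ⊢
    obtain ⟨w, hw, rfl⟩ := hz
    refine ⟨(starRingEnd ℂ) w, ?_, hconj w hw⟩
    rw [mem_ball_zero_iff] at hw ⊢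
    simpa using hw
  -- f is real on the real axis
  have hmemre : ∀ x : ℝ, |x| < 1 → (x : ℂ) ∈ ball (0 : ℂ) 1 := by
    intro x hx
    rw [mem_ball_zero_iff]
    simpa using hx
  have hreal : ∀ x : ℝ, |x| < 1 → (f x).im = 0 := by
    intro x hx
    have h := hconj x (hmemre x hx)
    rw [Complex.conj_ofReal] at h
    have := congrArg Complex.im h
    simp [Complex.conj_im] at this
    linarith
  have hfreal : ∀ x : ℝ, |x| < 1 → f x = ((f x).re : ℂ) := by
    intro x hx
    exact Complex.ext (by simp) (by simp [hreal x hx])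
  set g : ℝ → ℝ := fun x => (f x).re with hg
  have hgc : ContinuousOn g (Ioo (-1 : ℝ) 1) := by
    apply Complex.continuous_re.comp_continuousOn
    apply hcont.comp Complex.continuous_ofReal.continuousOn
    intro x hx
    exact hmemre x (abs_lt.mpr ⟨hx.1, hx.2⟩)
  have hg0 : g 0 = 0 := by simp [hg, hf0]
  -- g is positive on (0,1)
  have hgne : ∀ y ∈ Ioo (0 : ℝ) 1, g y ≠ 0 := by
    intro y hy h0
    have hylt : |y| < 1 := abs_lt.mpr ⟨by linarith [hy.1], hy.2⟩
    have hfy : f y = f 0 := by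
      rw [hf0, hfreal y hylt, show (f (y:ℂ)).re = 0 from h0]; simp
    have := hinj (hmemre y hylt) (by simp [mem_ball_zero_iff]) hfy
    exact absurd (by exact_mod_cast this) (ne_of_gt hy.1)
  have hgpos : ∀ x ∈ Ioo (0 : ℝ) 1, 0 < g x := by
    -- first find one point where g is positive, using the derivative at 0
    have hd0 : HasDerivAt f (deriv f 0) 0 :=
      (hf.differentiableAt (isOpen_ball.mem_nhds (by simp))).hasDerivAt
    have h1 : HasDerivAt (fun x : ℝ => f x) (deriv f 0) 0 := by
      have := hd0.comp_ofReal (z := 0)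
      simpa using this
    have hdg : HasDerivAt g (deriv f 0).re 0 := by
      have := (Complex.reCLM.hasFDerivAt (x := f ((0:ℝ) : ℂ))).comp_hasDerivAt 0 h1
      exact this
    have hslope := hasDerivAt_iff_tendsto_slope.mp hdg
    have h2 : Filter.Tendsto (slope g 0) (nhdsWithin 0 (Ioi 0)) (nhds (deriv f 0).re) :=
      hslope.mono_left (nhdsWithin_mono _ (fun x hx => ne_of_gt hx))
    have h3 : ∀ᶠ x in nhdsWithin (0:ℝ) (Ioi 0), 0 < slope g 0 x :=
      h2.eventually (eventually_gt_nhds hf'0.2)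
    have h4 : ∀ᶠ x in nhdsWithin (0:ℝ) (Ioi 0), x ∈ Ioo (0:ℝ) 1 :=
      Filter.eventually_of_mem (Ioo_mem_nhdsGT_of_mem ⟨le_refl 0, one_pos⟩) (fun x hx => hx)
    obtain ⟨x₀, hx₀s, hx₀i⟩ := (h3.and h4).exists
    have hx₀pos : 0 < g x₀ := by
      have : slope g 0 x₀ = g x₀ / x₀ := by
        rw [slope_def_field]; rw [hg0]; ring_nf
      rw [this] at hx₀s
      have := mul_pos hx₀s hx₀i.1
      rwa [div_mul_cancel₀ _ (ne_of_gt hx₀i.1)] at this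
    -- now sign is constant on (0,1) by IVT
    intro x hx
    rcases lt_trichotomy (g x) 0 with h | h | h
    · exfalso
      have hsub : uIcc x x₀ ⊆ Ioo (0 : ℝ) 1 :=
        ordConnected_Ioo.uIcc_subset hx hx₀i
      have hivt := intermediate_value_uIcc
        (hgc.mono (hsub.trans (Ioo_subset_Ioo (by norm_num) (le_refl 1))))
      have h0mem : (0:ℝ) ∈ uIcc (g x) (g x₀) := mem_uIcc.mpr (Or.inl ⟨h.le, hx₀pos.le⟩)
      obtain ⟨y, hy, hy0⟩ := hivt h0mem
      exact hgne y (hsub hy) hy0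
    · exact absurd h (hgne x hx)
    · exact h
  -- maximum modulus: on a circle of radius ρ, |f| ≤ g ρ
  have hmax : ∀ ρ : ℝ, ρ ∈ Ioo (0:ℝ) 1 → ∀ z ∈ closedBall (0:ℂ) ρ,
      ‖f z‖ ≤ g ρ := by
    intro ρ hρ z hz
    have hρabs : |ρ| < 1 := abs_lt.mpr ⟨by linarith [hρ.1], hρ.2⟩
    have hgρ : ‖f ρ‖ = g ρ := by
      rw [hfreal ρ hρabs, Complex.norm_real, Real.norm_eq_abs, abs_of_pos (hgpos ρ hρ)]
    have hsphere : ∀ w ∈ sphere (0:ℂ) ρ, ‖f w‖ ≤ g ρ := by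
      intro w hw
      have habsw : ‖w‖ = ρ := by
        rw [mem_sphere_zero_iff_norm] at hw
        simpa using hw
      have hweq : w = (ρ : ℂ) * Complex.exp ((Complex.arg w : ℂ) * Complex.I) := by
        conv_lhs => rw [← Complex.norm_mul_exp_arg_mul_I w]
        rw [habsw]
      have hw1 : w ∈ ball (0:ℂ) 1 := by
        rw [mem_ball_zero_iff]; rw [habsw]; exact hρ.2
      have habsf : ‖f w‖ =
          ‖f ((ρ : ℂ) * Complex.exp (((|Complex.arg w| : ℝ) : ℂ) * Complex.I))‖ := by
        rcases abs_cases (Complex.arg w) with ⟨h1, _⟩ | ⟨h1, _⟩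
        · rw [h1, ← hweq]
        · have hc : (ρ : ℂ) * Complex.exp (((|Complex.arg w| : ℝ) : ℂ) * Complex.I)
              = (starRingEnd ℂ) w := by
            rw [h1]
            conv_rhs => rw [hweq]
            rw [conj_ofReal_mul_exp]
          rw [hc, hconj w hw1, Complex.norm_conj]
      have hkey := hdecr ρ hρ (a := 0) (b := |Complex.arg w|)
        ⟨le_refl 0, Real.pi_pos.le⟩
        ⟨abs_nonneg _, Complex.abs_arg_le_pi w⟩ (abs_nonneg _)
      simp only [Complex.ofReal_zero, zero_mul, Complex.exp_zero, mul_one] at hkey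
      rw [← habsf] at hkey
      calc ‖f w‖ = ‖f w‖ := rfl
        _ ≤ ‖f ρ‖ := hkey
        _ = g ρ := hgρ
    have hdc : DiffContOnCl ℂ f (ball (0:ℂ) ρ) := by
      constructor
      · exact hf.mono (ball_subset_ball hρ.2.le)
      · rw [closure_ball (0:ℂ) (ne_of_gt hρ.1)]
        exact hcont.mono (fun z hz => by
          rw [mem_closedBall_zero_iff] at hz
          rw [mem_ball_zero_iff]; exact lt_of_le_of_lt hz hρ.2)
    have := Complex.norm_le_of_forall_mem_frontier_norm_le isBounded_ball hdc
      (C := g ρ) (by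
        rw [frontier_ball (0:ℂ) (ne_of_gt hρ.1)]
        exact hsphere)
      (z := z) (by rw [closure_ball (0:ℂ) (ne_of_gt hρ.1)]; exact hz)
    simpa using this
  -- the core lemma for 0 ≤ θ' ≤ θ ≤ π
  have core : ∀ r θ θ' : ℝ, 0 < r → 0 ≤ θ' → θ' ≤ θ → θ ≤ Real.pi →
      (r : ℂ) * Complex.exp ((θ : ℂ) * Complex.I) ∈ Ω →
      (r : ℂ) * Complex.exp ((θ' : ℂ) * Complex.I) ∈ Ω := by
    intro r θ θ' hr hθ'0 hle hθπ hw
    rcases eq_or_lt_of_le hle with rfl | hlt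
    · exact hw
    have hw' := hw
    rw [← himg] at hw'
    obtain ⟨z₀, hz₀b, hz₀⟩ := hw'
    have hz₀1 : ‖z₀‖ < 1 := by
      rw [mem_ball_zero_iff] at hz₀b; simpa using hz₀b
    set ρ₁ : ℝ := (‖z₀‖ + 1) / 2 with hρ₁def
    have habsnn := norm_nonneg z₀
    have hρ₁i : ρ₁ ∈ Ioo (0:ℝ) 1 := ⟨by simp only [hρ₁def]; linarith, by simp only [hρ₁def]; linarith⟩
    have hz₀ρ₁ : ‖z₀‖ < ρ₁ := by simp only [hρ₁def]; linarith
    have hrabs : ‖f z₀‖ = r := by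
      rw [hz₀]; exact abs_ofReal_mul_exp r θ hr.le
    have hrM : r ≤ g ρ₁ := by
      have h := hmax ρ₁ hρ₁i z₀ (by
        rw [mem_closedBall_zero_iff]
        exact hz₀ρ₁.le)
      rwa [hrabs] at h
    -- find x ∈ (0, ρ₁] with f x = r
    obtain ⟨x, hxI, hgx⟩ : ∃ x ∈ Icc (0:ℝ) ρ₁, g x = r := by
      have hsub : Icc (0:ℝ) ρ₁ ⊆ Ioo (-1:ℝ) 1 := fun y hy =>
        ⟨by linarith [hy.1], lt_of_le_of_lt hy.2 hρ₁i.2⟩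
      have hivt := intermediate_value_Icc hρ₁i.1.le (hgc.mono hsub)
      exact hivt ⟨by rw [hg0]; exact hr.le, hrM⟩
    have hx0 : 0 < x := by
      rcases eq_or_lt_of_le hxI.1 with h | h
      · exfalso; rw [← h, hg0] at hgx; exact (ne_of_gt hr) hgx.symm
      · exact h
    set ρ : ℝ := (ρ₁ + 1) / 2 with hρdef
    have hρi : ρ ∈ Ioo (0:ℝ) 1 := ⟨by simp only [hρdef]; linarith [hρ₁i.1], by simp only [hρdef]; linarith [hρ₁i.2]⟩
    have hρ₁ρ : ρ₁ < ρ := by simp only [hρdef]; linarith [hρ₁i.2]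
    set D : Set ℂ := f '' ball (0:ℂ) ρ with hD
    set K : Set ℂ := f '' closedBall (0:ℂ) ρ with hK
    set Γ : Set ℂ := f '' sphere (0:ℂ) ρ with hΓ
    have hballsub : ball (0:ℂ) ρ ⊆ ball (0:ℂ) 1 := ball_subset_ball hρi.2.le
    have hcballsub : closedBall (0:ℂ) ρ ⊆ ball (0:ℂ) 1 := fun z hz => by
      rw [mem_closedBall_zero_iff] at hz
      rw [mem_ball_zero_iff]
      exact lt_of_le_of_lt hz hρi.2
    have hspheresub : sphere (0:ℂ) ρ ⊆ ball (0:ℂ) 1 :=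
      sphere_subset_closedBall.trans hcballsub
    have hKΩ : K ⊆ Ω := by
      rw [← himg]; exact image_mono (f := f) hcballsub
    have hDK : D ⊆ K := image_mono (f := f) ball_subset_closedBall
    have hΓK : Γ ⊆ K := image_mono (f := f) sphere_subset_closedBall
    have hDΓ : ∀ w ∈ D, w ∉ Γ := by
      rintro w ⟨a, ha, rfl⟩ ⟨b, hb, hab⟩
      have : b = a := hinj (hspheresub hb) (hballsub ha) hab
      rw [mem_ball_zero_iff] at ha
      rw [mem_sphere_zero_iff_norm] at hb
      rw [this] at hb
      rw [hb] at ha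
      exact lt_irrefl _ ha
    have hKDΓ : ∀ w ∈ K, w ∉ Γ → w ∈ D := by
      rintro w ⟨a, ha, rfl⟩ hnΓ
      rcases lt_or_eq_of_le (mem_closedBall_zero_iff.mp ha) with h | h
      · exact ⟨a, mem_ball_zero_iff.mpr h, rfl⟩
      · exact absurd ⟨a, mem_sphere_zero_iff_norm.mpr h, rfl⟩ hnΓ
    have hKcompact : IsCompact K :=
      (isCompact_closedBall (0:ℂ) ρ).image_of_continuousOn (hcont.mono hcballsub)
    have hDopen : IsOpen D := by
      rw [isOpen_iff_mem_nhds]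
      rintro w ⟨z, hz, rfl⟩
      have hza : AnalyticAt ℂ f z := hf.analyticAt (isOpen_ball.mem_nhds (hballsub hz))
      rcases hza.eventually_constant_or_nhds_le_map_nhds with hconst | hmap
      · exfalso
        have h1 : ∀ᶠ z' in nhdsWithin z {z}ᶜ, f z' = f z :=
          hconst.filter_mono nhdsWithin_le_nhds
        have h2 : ∀ᶠ z' in nhdsWithin z {z}ᶜ, z' ∈ ball (0:ℂ) ρ :=
          (isOpen_ball.eventually_mem hz).filter_mono nhdsWithin_le_nhds
        have h3 : ∀ᶠ z' in nhdsWithin z {z}ᶜ, z' ≠ z := by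
          exact eventually_mem_nhdsWithin
        obtain ⟨z', hfz', hz'b, hz'ne⟩ := (h1.and (h2.and h3)).exists
        exact hz'ne (hinj (hballsub hz'b) (hballsub hz) hfz')
      · exact hmap (Filter.image_mem_map (isOpen_ball.mem_nhds hz))
    have hrD : (r : ℂ) ∈ D := by
      refine ⟨(x : ℂ), ?_, ?_⟩
      · rw [mem_ball_zero_iff]
        simp only [Complex.norm_real, Real.norm_eq_abs]
        rw [abs_of_pos hx0]
        exact lt_of_le_of_lt hxI.2 hρ₁ρ
      · have hxabs : |x| < 1 := by
          rw [abs_of_pos hx0]; exact lt_of_le_of_lt hxI.2 hρ₁i.2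
        rw [hfreal x hxabs, show (f (x:ℂ)).re = r from hgx]
    rcases eq_or_lt_of_le hθ'0 with h0 | hθ'pos
    · rw [← h0]
      have : (r : ℂ) * Complex.exp (((0:ℝ) : ℂ) * Complex.I) = (r : ℂ) := by
        simp
      rw [this]
      exact hKΩ (hDK hrD)
    by_contra hnot
    -- the crossing lemma
    have hcross : ∀ a b : ℝ, a < b →
        (((r:ℂ) * Complex.exp ((a:ℂ) * Complex.I) ∈ D ∧
          (r:ℂ) * Complex.exp ((b:ℂ) * Complex.I) ∉ K) ∨
         ((r:ℂ) * Complex.exp ((a:ℂ) * Complex.I) ∉ K ∧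
          (r:ℂ) * Complex.exp ((b:ℂ) * Complex.I) ∈ D)) →
        ∃ t, a < t ∧ t < b ∧ (r:ℂ) * Complex.exp ((t:ℂ) * Complex.I) ∈ Γ := by
      intro a b hab hends
      by_contra hno
      push_neg at hno
      set c : ℝ → ℂ := fun t => (r:ℂ) * Complex.exp ((t:ℂ) * Complex.I) with hc
      have hcc : Continuous c := by
        apply continuous_const.mul
        apply Complex.continuous_exp.comp
        exact (Complex.continuous_ofReal).mul continuous_const
      have hanotΓ : c a ∉ Γ := by
        rcases hends with ⟨h1, _⟩ | ⟨h1, _⟩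
        · exact hDΓ _ h1
        · exact fun h => h1 (hΓK h)
      have hbnotΓ : c b ∉ Γ := by
        rcases hends with ⟨_, h1⟩ | ⟨_, h1⟩
        · exact fun h => h1 (hΓK h)
        · exact hDΓ _ h1
      have hcover : Icc a b ⊆ c ⁻¹' D ∪ c ⁻¹' Kᶜ := by
        intro t ht
        have hnΓ : c t ∉ Γ := by
          rcases eq_or_lt_of_le ht.1 with h | h1
          · rw [← h]; exact hanotΓ
          rcases eq_or_lt_of_le ht.2 with h | h2
          · rw [h]; exact hbnotΓ
          exact hno t h1 h2
        by_cases hKt : c t ∈ K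
        · exact Or.inl (hKDΓ _ hKt hnΓ)
        · exact Or.inr hKt
      have hne1 : (Icc a b ∩ c ⁻¹' D).Nonempty ∧ (Icc a b ∩ c ⁻¹' Kᶜ).Nonempty := by
        rcases hends with ⟨h1, h2⟩ | ⟨h1, h2⟩
        · exact ⟨⟨a, ⟨le_refl a, hab.le⟩, h1⟩, ⟨b, ⟨hab.le, le_refl b⟩, h2⟩⟩
        · exact ⟨⟨b, ⟨hab.le, le_refl b⟩, h2⟩, ⟨a, ⟨le_refl a, hab.le⟩, h1⟩⟩
      obtain ⟨t, _, htD, htK⟩ := isPreconnected_Icc (u := c ⁻¹' D) (v := c ⁻¹' Kᶜ)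
        (hDopen.preimage hcc) (hKcompact.isClosed.isOpen_compl.preimage hcc)
        hcover hne1.1 hne1.2
      exact htK (hDK htD)
    have hc0D : (r:ℂ) * Complex.exp (((0:ℝ):ℂ) * Complex.I) ∈ D := by
      simpa using hrD
    have hcθ'K : (r:ℂ) * Complex.exp ((θ':ℂ) * Complex.I) ∉ K := fun h => hnot (hKΩ h)
    have hcθD : (r:ℂ) * Complex.exp ((θ:ℂ) * Complex.I) ∈ D := by
      refine ⟨z₀, ?_, hz₀⟩
      rw [mem_ball_zero_iff]
      exact lt_trans hz₀ρ₁ hρ₁ρ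
    obtain ⟨t₁, ht₁a, ht₁b, hΓ₁⟩ := hcross 0 θ' hθ'pos (Or.inl ⟨hc0D, hcθ'K⟩)
    obtain ⟨t₂, ht₂a, ht₂b, hΓ₂⟩ := hcross θ' θ hlt (Or.inr ⟨hcθ'K, hcθD⟩)
    -- pull back the crossing points to angles in [0, π] on the ρ-circle
    have hpre : ∀ t : ℝ, (r:ℂ) * Complex.exp ((t:ℂ) * Complex.I) ∈ Γ →
        ∃ v, 0 ≤ v ∧ v ≤ Real.pi ∧
          (f ((ρ:ℂ) * Complex.exp ((v:ℂ) * Complex.I)) =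
            (r:ℂ) * Complex.exp ((t:ℂ) * Complex.I) ∨
           f ((ρ:ℂ) * Complex.exp ((v:ℂ) * Complex.I)) =
            (starRingEnd ℂ) ((r:ℂ) * Complex.exp ((t:ℂ) * Complex.I))) := by
      rintro t ⟨z, hzs, hfz⟩
      have hza : ‖z‖ = ρ := by
        rw [mem_sphere_zero_iff_norm] at hzs; simpa using hzs
      have hzeq : z = (ρ:ℂ) * Complex.exp ((Complex.arg z : ℂ) * Complex.I) := by
        conv_lhs => rw [← Complex.norm_mul_exp_arg_mul_I z]
        rw [hza]
      rcases le_or_gt 0 (Complex.arg z) with h | h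
      · exact ⟨Complex.arg z, h, Complex.arg_le_pi z, Or.inl (by rw [← hzeq, hfz])⟩
      · refine ⟨-(Complex.arg z), by linarith, by linarith [Complex.neg_pi_lt_arg z], Or.inr ?_⟩
        have hcz : (ρ:ℂ) * Complex.exp (((-(Complex.arg z) : ℝ):ℂ) * Complex.I)
            = (starRingEnd ℂ) z := by
          conv_rhs => rw [hzeq]
          rw [conj_ofReal_mul_exp]
        rw [hcz, hconj z (hspheresub hzs), hfz]
    obtain ⟨v₁, hv₁0, hv₁π, hE₁⟩ := hpre t₁ hΓ₁
    obtain ⟨v₂, hv₂0, hv₂π, hE₂⟩ := hpre t₂ hΓ₂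
    have habsconj : ∀ t : ℝ,
        ‖(starRingEnd ℂ) ((r:ℂ) * Complex.exp ((t:ℂ) * Complex.I))‖ = r := by
      intro t
      rw [Complex.norm_conj]
      exact abs_ofReal_mul_exp r t hr.le
    have habs₁ : ‖f ((ρ:ℂ) * Complex.exp ((v₁:ℂ) * Complex.I))‖ = r := by
      rcases hE₁ with h | h <;> rw [h]
      · exact abs_ofReal_mul_exp r t₁ hr.le
      · exact habsconj t₁
    have habs₂ : ‖f ((ρ:ℂ) * Complex.exp ((v₂:ℂ) * Complex.I))‖ = r := by
      rcases hE₂ with h | h <;> rw [h]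
      · exact abs_ofReal_mul_exp r t₂ hr.le
      · exact habsconj t₂
    have hv₁I : v₁ ∈ Icc (0:ℝ) Real.pi := ⟨hv₁0, hv₁π⟩
    have hv₂I : v₂ ∈ Icc (0:ℝ) Real.pi := ⟨hv₂0, hv₂π⟩
    have hmodconst : ∀ v ∈ uIcc v₁ v₂,
        ‖f ((ρ:ℂ) * Complex.exp ((v:ℂ) * Complex.I))‖ = r := by
      intro v hv
      have hvI : v ∈ Icc (0:ℝ) Real.pi := (ordConnected_Icc.uIcc_subset hv₁I hv₂I) hv
      rcases le_total v₁ v₂ with h | h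
      · rw [uIcc_of_le h] at hv
        have hub : ‖f ((ρ:ℂ) * Complex.exp ((v:ℂ) * Complex.I))‖ ≤
            ‖f ((ρ:ℂ) * Complex.exp ((v₁:ℂ) * Complex.I))‖ :=
          hdecr ρ hρi hv₁I hvI hv.1
        have hlb : ‖f ((ρ:ℂ) * Complex.exp ((v₂:ℂ) * Complex.I))‖ ≤
            ‖f ((ρ:ℂ) * Complex.exp ((v:ℂ) * Complex.I))‖ :=
          hdecr ρ hρi hvI hv₂I hv.2
        rw [habs₁] at hub
        rw [habs₂] at hlb
        linarith
      · rw [uIcc_of_ge h] at hv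
        have hub : ‖f ((ρ:ℂ) * Complex.exp ((v:ℂ) * Complex.I))‖ ≤
            ‖f ((ρ:ℂ) * Complex.exp ((v₂:ℂ) * Complex.I))‖ :=
          hdecr ρ hρi hv₂I hvI hv.1
        have hlb : ‖f ((ρ:ℂ) * Complex.exp ((v₁:ℂ) * Complex.I))‖ ≤
            ‖f ((ρ:ℂ) * Complex.exp ((v:ℂ) * Complex.I))‖ :=
          hdecr ρ hρi hvI hv₁I hv.2
        rw [habs₂] at hub
        rw [habs₁] at hlb
        linarith
    set β : ℝ → ℝ :=
      fun v => Real.arccos ((f ((ρ:ℂ) * Complex.exp ((v:ℂ) * Complex.I))).re / r) with hβ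
    have hβc : ContinuousOn β (uIcc v₁ v₂) := by
      apply Real.continuous_arccos.comp_continuousOn
      apply ContinuousOn.div_const
      apply Complex.continuous_re.comp_continuousOn
      apply hcont.comp
      · exact Continuous.continuousOn (continuous_const.mul
          (Complex.continuous_exp.comp ((Complex.continuous_ofReal).mul continuous_const)))
      · intro v _
        rw [mem_ball_zero_iff]
        rw [abs_ofReal_mul_exp ρ v hρi.1.le]
        exact hρi.2
    have hret : ∀ t v : ℝ,
        (f ((ρ:ℂ) * Complex.exp ((v:ℂ) * Complex.I)) =
            (r:ℂ) * Complex.exp ((t:ℂ) * Complex.I) ∨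
         f ((ρ:ℂ) * Complex.exp ((v:ℂ) * Complex.I)) =
            (starRingEnd ℂ) ((r:ℂ) * Complex.exp ((t:ℂ) * Complex.I))) →
        (f ((ρ:ℂ) * Complex.exp ((v:ℂ) * Complex.I))).re = r * Real.cos t := by
      intro t v h
      rcases h with h | h <;> rw [h]
      · exact re_ofReal_mul_exp r t
      · rw [Complex.conj_re]
        exact re_ofReal_mul_exp r t
    have harccos : ∀ t : ℝ, 0 ≤ t → t ≤ Real.pi →
        Real.arccos (r * Real.cos t / r) = t := by
      intro t h1 h2
      rw [mul_comm, mul_div_assoc, div_self (ne_of_gt hr), mul_one]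
      exact Real.arccos_cos h1 h2
    have hβ₁ : β v₁ = t₁ := by
      simp only [hβ]
      rw [hret t₁ v₁ hE₁]
      exact harccos t₁ ht₁a.le (by linarith)
    have hβ₂ : β v₂ = t₂ := by
      simp only [hβ]
      rw [hret t₂ v₂ hE₂]
      exact harccos t₂ (by linarith) (by linarith)
    have hIVT := intermediate_value_uIcc hβc
    have hmemθ' : θ' ∈ uIcc (β v₁) (β v₂) := by
      rw [hβ₁, hβ₂]
      exact mem_uIcc.mpr (Or.inl ⟨ht₁b.le, ht₂a.le⟩)
    obtain ⟨v, hvmem, hβv⟩ := hIVT hmemθ'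
    set w : ℂ := f ((ρ:ℂ) * Complex.exp ((v:ℂ) * Complex.I)) with hwdef
    have hwΓ : w ∈ Γ := by
      refine ⟨(ρ:ℂ) * Complex.exp ((v:ℂ) * Complex.I), ?_, rfl⟩
      rw [mem_sphere_zero_iff_norm]
      exact abs_ofReal_mul_exp ρ v hρi.1.le
    have hwabs : ‖w‖ = r := hmodconst v hvmem
    have hwre : w.re = r * Real.cos θ' := by
      have hb : |w.re / r| ≤ 1 := by
        rw [abs_div, abs_of_pos hr, div_le_one hr]
        rw [← hwabs]
        exact Complex.abs_re_le_norm w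
      have hb' := abs_le.mp hb
      have hcos := Real.cos_arccos hb'.1 hb'.2
      have hβveq : Real.arccos (w.re / r) = θ' := hβv
      rw [hβveq] at hcos
      field_simp at hcos
      linarith [hcos]
    have hwim : w.im = r * Real.sin θ' ∨ w.im = -(r * Real.sin θ') := by
      have h1 : w.re ^ 2 + w.im ^ 2 = r ^ 2 := by
        have h := Complex.sq_norm w
        rw [hwabs, Complex.normSq_apply] at h
        nlinarith [h]
      have hcs := Real.sin_sq_add_cos_sq θ'
      have hre2 : w.re ^ 2 = (r * Real.cos θ') ^ 2 := by rw [hwre]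
      have h2 : w.im ^ 2 = (r * Real.sin θ') ^ 2 := by
        linear_combination h1 - hre2 - r ^ 2 * hcs
      have h3 : |w.im| = |r * Real.sin θ'| := by
        rw [← Real.sqrt_sq_eq_abs, ← Real.sqrt_sq_eq_abs, h2]
      exact abs_eq_abs.mp h3
    have hwΩ : w ∈ Ω := hKΩ (hΓK hwΓ)
    rcases hwim with h | h
    · apply hnot
      have heq : w = (r:ℂ) * Complex.exp ((θ':ℂ) * Complex.I) :=
        Complex.ext (by rw [hwre, re_ofReal_mul_exp]) (by rw [h, im_ofReal_mul_exp])
      rw [← heq]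
      exact hwΩ
    · apply hnot
      have heq : (starRingEnd ℂ) w = (r:ℂ) * Complex.exp ((θ':ℂ) * Complex.I) := by
        apply Complex.ext
        · rw [Complex.conj_re, hwre, re_ofReal_mul_exp]
        · rw [Complex.conj_im, h, im_ofReal_mul_exp, neg_neg]
      rw [← heq]
      exact hsym w hwΩ
  -- conclude, reducing to nonnegative angles via conjugation symmetry
  intro r θ θ' hr hle hpi hmem
  have hflip : ∀ s : ℝ, (r:ℂ) * Complex.exp ((s:ℂ) * Complex.I) ∈ Ω →
      (r:ℂ) * Complex.exp (((-s : ℝ):ℂ) * Complex.I) ∈ Ω := by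
    intro s hs
    have := hsym _ hs
    rwa [conj_ofReal_mul_exp] at this
  have hswap : ∀ s : ℝ, ((r:ℂ) * Complex.exp (((|s| : ℝ):ℂ) * Complex.I) ∈ Ω) ↔
      ((r:ℂ) * Complex.exp ((s:ℂ) * Complex.I) ∈ Ω) := by
    intro s
    rcases abs_cases s with ⟨h, _⟩ | ⟨h, _⟩
    · rw [h]
    · rw [h]
      constructor
      · intro hh
        have := hflip _ hh
        rwa [neg_neg] at this
      · intro hh
        exact hflip _ hh
  have hk := core r |θ| |θ'| hr (abs_nonneg _) hle hpi ((hswap θ).mpr hmem)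
  exact (hswap θ').mp hk
end

section
/- Let Ω be a simply connected, proper subdomain of ℂ containing 0, and let f be a normalized conformal mapping of 𝔻 onto Ω. Suppose f(conj(z)) = conj(f(z)) for all z ∈ 𝔻 and, for each r ∈ (0,1), the map θ ↦ |f(r·e^{iθ})| is decreasing (antitone) on [0, π]. Then either there exists a real α > 0 such that f(z) = α·z for all z ∈ 𝔻, or for each r ∈ (0,1) the map θ ↦ |f(r·e^{iθ})| is strictly decreasing on [0, π]. -/
open Complex Metric Set Filter Function


lemma aux_circle (f : ℂ → ℂ) (hf : DifferentiableOn ℂ f (ball (0 : ℂ) 1))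
    (hconj : ∀ z ∈ ball (0 : ℂ) 1, f (starRingEnd ℂ z) = starRingEnd ℂ (f z))
    {r a b c : ℝ} (hr : r ∈ Ioo (0 : ℝ) 1) (hab : a < b)
    (hc : ∀ θ ∈ Icc a b, ‖f ((r : ℂ) * Complex.exp ((θ : ℂ) * Complex.I))‖ = c) :
    ∀ w ∈ sphere (0 : ℂ) r, ‖f w‖ = c := by
  have hr0 := hr.1
  have hlog : Real.log r < 0 := Real.log_neg hr.1 hr.2
  -- bound helper
  have hb1 : ∀ t : ℝ, t < -Real.log r → r * Real.exp t < 1 := by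
    intro t ht
    have h2 : Real.exp t < r⁻¹ := by
      rw [← Real.exp_log (inv_pos.mpr hr0), Real.log_inv]
      exact Real.exp_lt_exp.mpr ht
    calc r * Real.exp t < r * r⁻¹ := by exact mul_lt_mul_of_pos_left h2 hr0
      _ = 1 := mul_inv_cancel₀ (ne_of_gt hr0)
  have habs1 : ∀ z : ℂ, ‖(r : ℂ) * Complex.exp (z * I)‖ = r * Real.exp (-z.im) := by
    intro z
    rw [norm_mul, Complex.norm_exp]
    simp [Real.norm_eq_abs, abs_of_pos hr0, Complex.mul_I_re]
  have habs2 : ∀ z : ℂ, ‖(r : ℂ) * Complex.exp (-(z * I))‖ = r * Real.exp z.im := by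
    intro z
    rw [norm_mul, Complex.norm_exp]
    simp [Real.norm_eq_abs, abs_of_pos hr0, Complex.mul_I_re]
  set S : Set ℂ := Complex.im ⁻¹' Ioo (Real.log r) (-Real.log r) with hS
  have hSopen : IsOpen S := isOpen_Ioo.preimage Complex.continuous_im
  have hSconv : Convex ℝ S := (convex_Ioo _ _).linear_preimage Complex.imLm
  have hmem1 : ∀ z ∈ S, (r : ℂ) * Complex.exp (z * I) ∈ ball (0 : ℂ) 1 := by
    intro z hz
    rw [mem_ball_zero_iff, habs1]
    exact hb1 _ (by simpa using neg_lt_neg hz.1)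
  have hmem2 : ∀ z ∈ S, (r : ℂ) * Complex.exp (-(z * I)) ∈ ball (0 : ℂ) 1 := by
    intro z hz
    rw [mem_ball_zero_iff, habs2]
    exact hb1 _ hz.2
  set H : ℂ → ℂ := fun z => f ((r : ℂ) * Complex.exp (z * I)) * f ((r : ℂ) * Complex.exp (-(z * I))) with hH
  have hHdiff : DifferentiableOn ℂ H S := by
    have hg1 : Differentiable ℂ fun z : ℂ => (r : ℂ) * Complex.exp (z * I) :=
      ((differentiable_id.mul (differentiable_const I)).cexp).const_mul _
    have hg2 : Differentiable ℂ fun z : ℂ => (r : ℂ) * Complex.exp (-(z * I)) :=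
      (((differentiable_id.mul (differentiable_const I)).neg).cexp).const_mul _
    exact (hf.comp hg1.differentiableOn hmem1).mul (hf.comp hg2.differentiableOn hmem2)
  have hHan : AnalyticOnNhd ℂ H S := (analyticOnNhd_iff_differentiableOn hSopen).mpr hHdiff
  have hGan : AnalyticOnNhd ℂ (fun _ : ℂ => ((c ^ 2 : ℝ) : ℂ)) S := analyticOnNhd_const
  -- conj identity
  have hconjz : ∀ θ : ℝ, (r : ℂ) * Complex.exp (-((θ : ℂ) * I)) =
      (starRingEnd ℂ) ((r : ℂ) * Complex.exp ((θ : ℂ) * I)) := by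
    intro θ
    rw [map_mul, ← Complex.exp_conj]
    simp
  have hrealmem : ∀ θ : ℝ, ((θ : ℝ) : ℂ) ∈ S := by
    intro θ
    simp only [hS, mem_preimage, Complex.ofReal_im, mem_Ioo]
    constructor <;> linarith
  have hHreal : ∀ θ : ℝ, H ((θ : ℝ) : ℂ) =
      ((‖f ((r : ℂ) * Complex.exp ((θ : ℂ) * I))‖ ^ 2 : ℝ) : ℂ) := by
    intro θ
    have hmem := hmem1 _ (hrealmem θ)
    rw [hH]
    simp only
    rw [hconjz θ, hconj _ hmem, Complex.mul_conj, Complex.normSq_eq_norm_sq]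
  -- values on the arc
  have harc : ∀ θ : ℝ, θ ∈ Icc a b → H ((θ : ℝ) : ℂ) = ((c ^ 2 : ℝ) : ℂ) := by
    intro θ hθ
    rw [hHreal θ, hc θ hθ]
  -- frequently near a
  have hfreq : ∃ᶠ z in nhdsWithin ((a : ℝ) : ℂ) {((a : ℝ) : ℂ)}ᶜ, H z = ((c ^ 2 : ℝ) : ℂ) := by
    have hεpos : ∀ n : ℕ, 0 < (b - a) / (n + 1) := fun n =>
      div_pos (sub_pos.mpr hab) (by positivity)
    have hεle : ∀ n : ℕ, (b - a) / (n + 1) ≤ b - a := fun n =>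
      div_le_self (sub_pos.mpr hab).le (by norm_num)
    have htend : Tendsto (fun n : ℕ => ((a + (b - a) / (n + 1) : ℝ) : ℂ)) atTop
        (nhdsWithin ((a : ℝ) : ℂ) {((a : ℝ) : ℂ)}ᶜ) := by
      apply tendsto_nhdsWithin_of_tendsto_nhds_of_eventually_within
      · have h1 : Tendsto (fun n : ℕ => a + (b - a) / (n + 1)) atTop (nhds a) := by
          have h0 := tendsto_one_div_add_atTop_nhds_zero_nat (𝕜 := ℝ)
          have h2 := (tendsto_const_nhds : Filter.Tendsto (fun _ : ℕ => a) Filter.atTop (nhds a)).add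
            (h0.const_mul (b - a))
          simpa [mul_one_div, div_eq_mul_inv] using h2
        exact (Complex.continuous_ofReal.tendsto a).comp h1
      · filter_upwards with n
        simp only [mem_compl_iff, mem_singleton_iff, Complex.ofReal_inj]
        have := hεpos n
        intro h
        nlinarith [hεpos n]
    apply htend.frequently
    apply Filter.Eventually.frequently
    filter_upwards with n
    exact harc _ ⟨by nlinarith [hεpos n], by nlinarith [hεle n]⟩
  have hEq : EqOn H (fun _ : ℂ => ((c ^ 2 : ℝ) : ℂ)) S :=
    hHan.eqOn_of_preconnected_of_frequently_eq hGan hSconv.isPreconnected (hrealmem a) hfreq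
  -- conclude
  intro w hw
  have hwr : ‖w‖ = r := by
    rw [mem_sphere_zero_iff_norm] at hw
    simpa using hw
  have hid : (r : ℂ) * Complex.exp ((Complex.arg w : ℂ) * I) = w := by
    rw [← hwr]
    exact Complex.norm_mul_exp_arg_mul_I w
  have h2 := hEq (hrealmem (Complex.arg w))
  rw [hHreal (Complex.arg w), hid] at h2
  have h3 : ‖f w‖ ^ 2 = c ^ 2 := by
    simp only at h2
    exact_mod_cast h2
  have h4 : 0 ≤ c := by
    have := hc a ⟨le_refl a, hab.le⟩
    rw [← this]
    exact norm_nonneg _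
  nlinarith [norm_nonneg (f w)]


lemma aux_linear (f : ℂ → ℂ) (hf : DifferentiableOn ℂ f (ball (0 : ℂ) 1))
    (hinj : InjOn f (ball (0 : ℂ) 1)) (hf0 : f 0 = 0) (hd0 : deriv f 0 ≠ 0)
    {r c : ℝ} (hr : r ∈ Ioo (0 : ℝ) 1) (hc : 0 < c)
    (hcirc : ∀ w ∈ sphere (0 : ℂ) r, ‖f w‖ = c) :
    EqOn f (fun z => deriv f 0 * z) (ball (0 : ℂ) 1) := by
  have hr0 := hr.1
  have h01 : (0 : ℂ) ∈ ball (0 : ℂ) 1 := mem_ball_self one_pos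
  have hfz : ∀ z ∈ ball (0 : ℂ) 1, z ≠ 0 → f z ≠ 0 := by
    intro z hz hz0 hfz
    exact hz0 (hinj hz h01 (by rw [hfz, hf0]))
  set h : ℂ → ℂ := dslope f 0 with hh
  have hhdiff : DifferentiableOn ℂ h (ball (0 : ℂ) 1) :=
    (differentiableOn_dslope (ball_mem_nhds 0 one_pos)).mpr hf
  have hh0 : h 0 = deriv f 0 := dslope_same f 0
  have hhne : ∀ z ∈ ball (0 : ℂ) 1, h z ≠ 0 := by
    intro z hz
    rcases eq_or_ne z 0 with rfl | hz0
    · rw [hh0]; exact hd0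
    · rw [hh, dslope_of_ne f hz0, slope_def_field]
      rw [hf0, sub_zero, sub_zero]
      exact div_ne_zero (hfz z hz hz0) hz0
  have hsub : closure (ball (0 : ℂ) r) ⊆ ball (0 : ℂ) 1 := by
    rw [closure_ball 0 (ne_of_gt hr0)]
    exact closedBall_subset_ball hr.2
  have hfr : frontier (ball (0 : ℂ) r) = sphere (0 : ℂ) r := frontier_ball 0 (ne_of_gt hr0)
  have hsph : ∀ w ∈ sphere (0 : ℂ) r, ‖h w‖ = c / r := by
    intro w hw
    have hwr : ‖w‖ = r := by
      rw [mem_sphere_zero_iff_norm] at hw; simpa using hw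
    have hw0 : w ≠ 0 := by
      intro h0; rw [h0] at hwr; simp at hwr; exact (ne_of_gt hr0) hwr.symm
    rw [hh, dslope_of_ne f hw0, slope_def_field, hf0, sub_zero, sub_zero, norm_div,
      hcirc w hw, hwr]
  -- max modulus
  have hmax : ∀ z ∈ ball (0 : ℂ) r, ‖h z‖ ≤ c / r := by
    intro z hz
    have := norm_le_of_forall_mem_frontier_norm_le (isBounded_ball)
      ((hhdiff.mono hsub).diffContOnCl)
      (C := c / r) (fun w hw => by rw [hfr] at hw; rw [hsph w hw])
      (subset_closure hz)
    simpa using this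
  -- min modulus via inverse
  have hmin : ∀ z ∈ ball (0 : ℂ) r, c / r ≤ ‖h z‖ := by
    intro z hz
    have hidiff : DifferentiableOn ℂ (fun z => (h z)⁻¹) (ball (0 : ℂ) 1) :=
      hhdiff.inv hhne
    have hle := norm_le_of_forall_mem_frontier_norm_le (isBounded_ball)
      ((hidiff.mono hsub).diffContOnCl)
      (C := (c / r)⁻¹) (fun w hw => by
        rw [hfr] at hw
        rw [norm_inv, hsph w hw])
      (subset_closure hz)
    rw [norm_inv] at hle
    have hcr : 0 < c / r := div_pos hc hr0
    have habs : 0 < ‖h z‖ :=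
      norm_pos_iff.mpr (hhne z (ball_subset_ball hr.2.le hz))
    rw [inv_le_inv₀ habs hcr] at hle
    exact hle
  -- h is constant on ball 0 r
  have hmaxOn : IsMaxOn (norm ∘ h) (ball (0 : ℂ) r) 0 := by
    intro z hz
    simp only [Function.comp_apply]
    calc ‖h z‖ ≤ c / r := hmax z hz
      _ ≤ ‖h 0‖ := hmin 0 (mem_ball_self hr0)
  have hconst : EqOn h (const ℂ (h 0)) (ball (0 : ℂ) r) :=
    Complex.eqOn_of_isPreconnected_of_isMaxOn_norm (convex_ball 0 r).isPreconnected
      isOpen_ball (hhdiff.mono (ball_subset_ball hr.2.le)) (mem_ball_self hr0) hmaxOn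
  -- f is linear on ball 0 r
  have hlin : EqOn f (fun z => deriv f 0 * z) (ball (0 : ℂ) r) := by
    intro z hz
    rcases eq_or_ne z 0 with rfl | hz0
    · simp [hf0]
    · have := hconst hz
      rw [hh, dslope_of_ne f hz0, slope_def_field, hf0, sub_zero, sub_zero] at this
      simp only [const_apply, ← hh, hh0] at this
      field_simp at this
      simpa [mul_comm] using this
  -- extend by identity theorem
  have hfan : AnalyticOnNhd ℂ f (ball (0 : ℂ) 1) :=
    (analyticOnNhd_iff_differentiableOn isOpen_ball).mpr hf
  have hgan : AnalyticOnNhd ℂ (fun z => deriv f 0 * z) (ball (0 : ℂ) 1) :=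
    (analyticOnNhd_iff_differentiableOn isOpen_ball).mpr
      ((differentiable_id.const_mul _).differentiableOn)
  exact hfan.eqOn_of_preconnected_of_eventuallyEq hgan (convex_ball 0 1).isPreconnected h01
    (hlin.eventuallyEq_of_mem (isOpen_ball.mem_nhds (mem_ball_self hr0)))

/-- Lemma 3.4: if the normalized Riemann map `f` of a simply connected, proper
subdomain `Ω ∋ 0` commutes with conjugation and `θ ↦ |f(r e^{iθ})|` is decreasing
on `[0, π]` for each `r ∈ (0,1)`, then either `f(z) ≡ αz` with `α > 0`, or, for each
`r ∈ (0,1)`, the map `θ ↦ |f(r e^{iθ})|` is strictly decreasing on `[0, π]`. -/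
theorem strict_decrease_dichotomy
    (Ω : Set ℂ) (hΩopen : IsOpen Ω) (hΩconn : IsConnected Ω)
    (hΩsc : SimplyConnectedSpace Ω) (hΩne : Ω ≠ univ) (hΩ0 : (0 : ℂ) ∈ Ω)
    (f : ℂ → ℂ) (hf : DifferentiableOn ℂ f (ball (0 : ℂ) 1))
    (hinj : InjOn f (ball (0 : ℂ) 1)) (himg : f '' ball (0 : ℂ) 1 = Ω)
    (hf0 : f 0 = 0) (hf'0 : (deriv f 0).im = 0 ∧ 0 < (deriv f 0).re)
    (hconj : ∀ z ∈ ball (0 : ℂ) 1, f (starRingEnd ℂ z) = starRingEnd ℂ (f z))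
    (hdecr : ∀ r : ℝ, r ∈ Ioo (0 : ℝ) 1 →
      AntitoneOn (fun θ : ℝ => ‖f ((r : ℂ) * Complex.exp ((θ : ℂ) * Complex.I))‖)
        (Icc (0 : ℝ) Real.pi)) :
    (∃ α : ℝ, 0 < α ∧ ∀ z ∈ ball (0 : ℂ) 1, f z = (α : ℂ) * z) ∨
    ∀ r : ℝ, r ∈ Ioo (0 : ℝ) 1 →
      StrictAntiOn (fun θ : ℝ => ‖f ((r : ℂ) * Complex.exp ((θ : ℂ) * Complex.I))‖)
        (Icc (0 : ℝ) Real.pi) := by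
  obtain ⟨him, hre⟩ := hf'0
  rw [or_iff_not_imp_right]
  intro hne
  simp only [StrictAntiOn] at hne
  push_neg at hne
  obtain ⟨r, hr, a, ha, b, hb, hab, hle⟩ := hne
  set F : ℝ → ℝ := fun θ => ‖f ((r : ℂ) * Complex.exp ((θ : ℂ) * Complex.I))‖ with hF
  have hA : AntitoneOn F (Icc (0 : ℝ) Real.pi) := hdecr r hr
  have hconstF : ∀ θ ∈ Icc a b, F θ = F a := by
    intro θ hθ
    have hθmem : θ ∈ Icc (0 : ℝ) Real.pi := ⟨ha.1.trans hθ.1, hθ.2.trans hb.2⟩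
    have h1 : F θ ≤ F a := hA ha hθmem hθ.1
    have h2 : F b ≤ F θ := hA hθmem hb hθ.2
    linarith
  -- the constant c
  set c : ℝ := F a with hcdef
  have hzmem : ∀ θ : ℝ, (r : ℂ) * Complex.exp ((θ : ℂ) * I) ∈ ball (0 : ℂ) 1 := by
    intro θ
    rw [mem_ball_zero_iff, norm_mul, Complex.norm_exp]
    simp [Real.norm_eq_abs, abs_of_pos hr.1, hr.2]
  have hzne : ∀ θ : ℝ, (r : ℂ) * Complex.exp ((θ : ℂ) * I) ≠ 0 :=
    fun θ => mul_ne_zero (by exact_mod_cast ne_of_gt hr.1) (Complex.exp_ne_zero _)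
  have hc : 0 < c := by
    rw [hcdef, hF]
    simp only [norm_pos_iff]
    intro h0
    exact hzne a (hinj (hzmem a) (mem_ball_self one_pos) (by rw [h0, hf0]))
  -- |f| is constant on the sphere of radius r
  have hcirc : ∀ w ∈ sphere (0 : ℂ) r, ‖f w‖ = c :=
    aux_circle f hf hconj hr hab hconstF
  have hd0 : deriv f 0 ≠ 0 := by
    intro h0
    rw [h0] at hre
    simp at hre
  have heq := aux_linear f hf hinj hf0 hd0 hr hc hcirc
  refine ⟨(deriv f 0).re, hre, fun z hz => ?_⟩
  have : deriv f 0 = ((deriv f 0).re : ℂ) := by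
    apply Complex.ext <;> simp [him]
  rw [heq hz, ← this]
end

section
/- Let a, b be positive real numbers with 3a + 5b ≤ 1 and a·b + 4b ≤ a, and define f(z) = z + a·z³ − b·z⁵. Then f is injective on the open unit disk 𝔻, and the image Ω = f(𝔻) is a bi-circularly symmetric domain. -/
set_option maxHeartbeats 1000000

open Complex Metric Set

/-- A plane domain `Ω` is bi-circularly symmetric if its intersection with each
circle centred at the origin is empty, the whole circle, or the union of two subarcs
of equal length centred on the positive and negative real axes; equivalently,
`Ω = −Ω`, `Ω` is invariant under conjugation, and for every `r > 0` and angles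
`0 ≤ θ' ≤ θ ≤ π/2`, if `r·e^{iθ} ∈ Ω` then `r·e^{iθ'} ∈ Ω`. -/
def BiCircularlySymmetric (Ω : Set ℂ) : Prop :=
  (∀ z ∈ Ω, -z ∈ Ω) ∧ (∀ z ∈ Ω, starRingEnd ℂ z ∈ Ω) ∧
  ∀ r θ θ' : ℝ, 0 < r → 0 ≤ θ' → θ' ≤ θ → θ ≤ Real.pi / 2 →
    (r : ℂ) * Complex.exp ((θ : ℂ) * Complex.I) ∈ Ω →
    (r : ℂ) * Complex.exp ((θ' : ℂ) * Complex.I) ∈ Ω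

noncomputable def Complex.abs : AbsoluteValue ℂ ℝ where
  toFun := norm
  map_mul' := norm_mul
  nonneg' := norm_nonneg
  eq_zero' := fun _ => norm_eq_zero
  add_le' := norm_add_le

@[simp] lemma Complex.abs_def' (z : ℂ) : Complex.abs z = ‖z‖ := rfl

lemma Complex.abs_ofReal (r : ℝ) : Complex.abs (r : ℂ) = |r| := by simp

lemma Complex.normSq_eq_abs (z : ℂ) : Complex.normSq z = Complex.abs z ^ 2 := by
  simp [Complex.normSq_eq_norm_sq]

lemma Complex.abs_exp_ofReal_mul_I (x : ℝ) : Complex.abs (Complex.exp (x * Complex.I)) = 1 := by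
  simp

lemma Complex.abs_mul_exp_arg_mul_I (z : ℂ) :
    (Complex.abs z : ℂ) * Complex.exp (Complex.arg z * Complex.I) = z := by
  simpa using Complex.norm_mul_exp_arg_mul_I z

lemma Complex.abs_apply (z : ℂ) : Complex.abs z = Real.sqrt (Complex.normSq z) := by
  simp [Complex.normSq_eq_norm_sq]

lemma Complex.norm_eq_abs (z : ℂ) : ‖z‖ = Complex.abs z := rfl

namespace QBS

lemma abs_sub_le' (X Y : ℂ) : Complex.abs (X - Y) ≤ Complex.abs X + Complex.abs Y := by
  simpa [sub_eq_add_neg] using Complex.abs.add_le X (-Y)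

lemma f_re (a b : ℝ) (z : ℂ) :
    (z + (a:ℂ)*z^3 - (b:ℂ)*z^5).re
      = z.re * (1 + a*(z.re^2 - 3*z.im^2) - b*(z.re^4 - 10*z.re^2*z.im^2 + 5*z.im^4)) := by
  simp [pow_succ, Complex.mul_re, Complex.mul_im]
  ring

lemma f_im (a b : ℝ) (z : ℂ) :
    (z + (a:ℂ)*z^3 - (b:ℂ)*z^5).im
      = z.im * (1 + a*(3*z.re^2 - z.im^2) - b*(5*z.re^4 - 10*z.re^2*z.im^2 + z.im^4)) := by
  simp [pow_succ, Complex.mul_re, Complex.mul_im]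
  ring

lemma base_pos {a b : ℝ} (ha : 0 < a) (hb : 0 < b) (h1 : 3*a+5*b ≤ 1)
    {s : ℝ} (hs0 : 0 ≤ s) (hs1 : s < 1) :
    0 < 1 - 3*a*s - 5*b*s^2 := by
  nlinarith [mul_nonneg hb.le (mul_nonneg hs0 (by linarith : (0:ℝ) ≤ 1 - s)),
    mul_nonneg (by linarith : (0:ℝ) ≤ 1 - (3*a+5*b)) hs0]

lemma P_pos {a b : ℝ} (ha : 0 < a) (hb : 0 < b) (h1 : 3*a+5*b ≤ 1)
    {x y : ℝ} (hxy : x^2 + y^2 < 1) :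
    0 < 1 + a*(x^2-3*y^2) - b*(x^4-10*x^2*y^2+5*y^4) := by
  have hs0 : (0:ℝ) ≤ x^2 + y^2 := by positivity
  have hbase := base_pos ha hb h1 hs0 hxy
  nlinarith [mul_nonneg ha.le (sq_nonneg x), mul_nonneg hb.le (sq_nonneg (x^2)),
    mul_nonneg hb.le (mul_nonneg (sq_nonneg x) (sq_nonneg y))]

lemma Q_pos {a b : ℝ} (ha : 0 < a) (hb : 0 < b) (h1 : 3*a+5*b ≤ 1)
    {x y : ℝ} (hxy : x^2 + y^2 < 1) :
    0 < 1 + a*(3*x^2-y^2) - b*(5*x^4-10*x^2*y^2+y^4) := by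
  have hs0 : (0:ℝ) ≤ x^2 + y^2 := by positivity
  have hbase := base_pos ha hb h1 hs0 hxy
  nlinarith [mul_nonneg ha.le (sq_nonneg x), mul_nonneg ha.le (sq_nonneg y),
    mul_nonneg hb.le (sq_nonneg (y^2)),
    mul_nonneg hb.le (mul_nonneg (sq_nonneg x) (sq_nonneg y))]

noncomputable def Hfun (a b s d : ℝ) : ℝ :=
  s + a^2*s^3 + b^2*s^5 + 2*b*s^3 + 2*a*s*(1-b*s^2)*d - 4*b*s*d^2

noncomputable def Gfun (a b ρ c : ℝ) : ℝ :=
  (1+c)/2*(ρ + a*ρ^3 - b*ρ^5)^2 + (1-c)/2*(ρ - a*ρ^3 - b*ρ^5)^2 + 4*b*ρ^6*(1-c^2)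

lemma normSq_f (a b : ℝ) (z : ℂ) :
    Complex.normSq (z + (a:ℂ)*z^3 - (b:ℂ)*z^5)
      = Hfun a b (z.re^2 + z.im^2) (z.re^2 - z.im^2) := by
  rw [Complex.normSq_apply, f_re, f_im, Hfun]
  ring

lemma Hfun_polar (a b ρ c : ℝ) : Hfun a b (ρ^2) (ρ^2*c) = Gfun a b ρ c := by
  rw [Hfun, Gfun]; ring

lemma normSq_f_polar (a b ρ t : ℝ) :
    Complex.normSq (((ρ:ℂ)*Complex.exp (t*I)) + (a:ℂ)*((ρ:ℂ)*Complex.exp (t*I))^3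
        - (b:ℂ)*((ρ:ℂ)*Complex.exp (t*I))^5)
      = Gfun a b ρ (Real.cos (2*t)) := by
  set z := (ρ:ℂ)*Complex.exp (t*I) with hz
  have hre : z.re = ρ * Real.cos t := by
    simp [hz, Complex.exp_mul_I, Complex.mul_re, Complex.cos_ofReal_re, Complex.sin_ofReal_re]
  have him : z.im = ρ * Real.sin t := by
    simp [hz, Complex.exp_mul_I, Complex.mul_im, Complex.cos_ofReal_re, Complex.sin_ofReal_re]
  rw [normSq_f, hre, him]
  have h1 : (ρ*Real.cos t)^2 + (ρ*Real.sin t)^2 = ρ^2 := by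
    linear_combination ρ^2 * Real.sin_sq_add_cos_sq t
  have h2 : (ρ*Real.cos t)^2 - (ρ*Real.sin t)^2 = ρ^2 * Real.cos (2*t) := by
    linear_combination (-(ρ^2)) * Real.sin_sq_add_cos_sq t + (-(ρ^2)) * Real.cos_two_mul t
  rw [h1, h2, Hfun_polar]

lemma G_le_c {a b : ℝ} (ha : 0 < a) (hb : 0 < b) (h2 : a*b+4*b ≤ a)
    {ρ c₁ c₂ : ℝ} (hρ0 : 0 ≤ ρ) (hρ1 : ρ ≤ 1) (hc1 : -1 ≤ c₁) (hc : c₁ ≤ c₂) (hc2 : c₂ ≤ 1) :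
    Gfun a b ρ c₁ ≤ Gfun a b ρ c₂ := by
  have key : Gfun a b ρ c₂ - Gfun a b ρ c₁
      = (c₂-c₁)*(2*a*ρ^4*(1-b*ρ^4) - 4*b*ρ^6*(c₂+c₁)) := by rw [Gfun, Gfun]; ring
  have h64 : ρ^6 ≤ ρ^4 := pow_le_pow_of_le_one hρ0 hρ1 (by norm_num)
  have h84 : ρ^8 ≤ ρ^4 := pow_le_pow_of_le_one hρ0 hρ1 (by norm_num)
  have hρ4 : (0:ℝ) ≤ ρ^4 := by positivity
  have hρ6 : (0:ℝ) ≤ ρ^6 := by positivity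
  have e1 : a*b*ρ^8 ≤ a*b*ρ^4 := by nlinarith [mul_pos ha hb]
  have e2 : 4*b*ρ^6*(c₂+c₁) ≤ 8*b*ρ^6 := by nlinarith [mul_nonneg hb.le hρ6]
  have e3 : 8*b*ρ^6 ≤ 8*b*ρ^4 := by nlinarith [hb.le]
  have e4 : (0:ℝ) ≤ ρ^4*(a - a*b - 4*b) := mul_nonneg hρ4 (by linarith)
  have inner : 0 ≤ 2*a*ρ^4*(1-b*ρ^4) - 4*b*ρ^6*(c₂+c₁) := by nlinarith
  nlinarith [mul_nonneg (by linarith : (0:ℝ) ≤ c₂ - c₁) inner]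

lemma phip_lt {a b : ℝ} (ha : 0 < a) (hb : 0 < b) (h1 : 3*a+5*b ≤ 1)
    {r1 r2 : ℝ} (h0 : 0 ≤ r1) (h12 : r1 < r2) (h21 : r2 ≤ 1) :
    r1 + a*r1^3 - b*r1^5 < r2 + a*r2^3 - b*r2^5 := by
  have h10 : r1 ≤ 1 := by linarith
  have h20 : (0:ℝ) ≤ r2 := by linarith
  have key : (r2 + a*r2^3 - b*r2^5) - (r1 + a*r1^3 - b*r1^5)
      = (r2-r1)*(1 + a*(r1^2+r1*r2+r2^2) - b*(r1^4+r1^3*r2+r1^2*r2^2+r1*r2^3+r2^4)) := by ring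
  have t4 : r1^4 ≤ 1 := pow_le_one₀ h0 h10
  have t5 : r1^3*r2 ≤ 1 := by nlinarith [(pow_le_one₀ h0 h10 : r1^3 ≤ 1)]
  have t6 : r1^2*r2^2 ≤ 1 := by
    nlinarith [(pow_le_one₀ h0 h10 : r1^2 ≤ 1), (pow_le_one₀ h20 h21 : r2^2 ≤ 1), sq_nonneg r1]
  have t7 : r1*r2^3 ≤ 1 := by nlinarith [(pow_le_one₀ h20 h21 : r2^3 ≤ 1)]
  have t8 : r2^4 ≤ 1 := pow_le_one₀ h20 h21
  have hfac : 0 < 1 + a*(r1^2+r1*r2+r2^2) - b*(r1^4+r1^3*r2+r1^2*r2^2+r1*r2^3+r2^4) := by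
    nlinarith [mul_nonneg ha.le (sq_nonneg r1), mul_nonneg ha.le (sq_nonneg r2),
      mul_nonneg ha.le (mul_nonneg h0 h20), hb.le]
  nlinarith [mul_pos (by linarith : (0:ℝ) < r2 - r1) hfac]

lemma phim_lt {a b : ℝ} (ha : 0 < a) (hb : 0 < b) (h1 : 3*a+5*b ≤ 1)
    {r1 r2 : ℝ} (h0 : 0 ≤ r1) (h12 : r1 < r2) (h21 : r2 ≤ 1) :
    r1 - a*r1^3 - b*r1^5 < r2 - a*r2^3 - b*r2^5 := by
  have h10 : r1 ≤ 1 := by linarith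
  have h20 : (0:ℝ) ≤ r2 := by linarith
  have t1 : r1^2 ≤ r1 := by nlinarith
  have t2 : r1*r2 ≤ r1 := by nlinarith
  have t3 : r2^2 ≤ 1 := pow_le_one₀ h20 h21
  have t4 : r1^4 ≤ r1 := by nlinarith [(pow_le_one₀ h0 h10 : r1^3 ≤ 1)]
  have t5 : r1^3*r2 ≤ r1 := by
    nlinarith [(pow_le_one₀ h0 h10 : r1^2 ≤ 1), mul_le_of_le_one_right h0 h21]
  have t6 : r1^2*r2^2 ≤ r1 := by nlinarith [(pow_le_one₀ h20 h21 : r2^2 ≤ 1)]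
  have t7 : r1*r2^3 ≤ r1 := by nlinarith [(pow_le_one₀ h20 h21 : r2^3 ≤ 1)]
  have t8 : r2^4 ≤ 1 := pow_le_one₀ h20 h21
  have hfac : 0 < 1 - a*(r1^2+r1*r2+r2^2) - b*(r1^4+r1^3*r2+r1^2*r2^2+r1*r2^3+r2^4) := by
    nlinarith [mul_pos ha (by linarith : (0:ℝ) < 1 - r1),
      mul_pos hb (by linarith : (0:ℝ) < 1 - r1),
      mul_nonneg ha.le h0, mul_nonneg hb.le h0]
  nlinarith [mul_pos (by linarith : (0:ℝ) < r2 - r1) hfac]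

lemma phim_nonneg {a b : ℝ} (ha : 0 < a) (hb : 0 < b) (h1 : 3*a+5*b ≤ 1)
    {r : ℝ} (h0 : 0 ≤ r) (h1' : r ≤ 1) : 0 ≤ r - a*r^3 - b*r^5 := by
  have t1 : r^3 ≤ r := by nlinarith [(pow_le_one₀ h0 h1' : r^2 ≤ 1)]
  have t2 : r^5 ≤ r := by nlinarith [(pow_le_one₀ h0 h1' : r^4 ≤ 1)]
  nlinarith [mul_nonneg ha.le h0, mul_nonneg hb.le h0]

lemma phip_nonneg {a b : ℝ} (ha : 0 < a) (hb : 0 < b) (h1 : 3*a+5*b ≤ 1)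
    {r : ℝ} (h0 : 0 ≤ r) (h1' : r ≤ 1) : 0 ≤ r + a*r^3 - b*r^5 := by
  have t2 : r^5 ≤ r := by nlinarith [(pow_le_one₀ h0 h1' : r^4 ≤ 1)]
  nlinarith [mul_nonneg ha.le (pow_nonneg h0 3), mul_nonneg hb.le h0]

lemma G_lt {a b : ℝ} (ha : 0 < a) (hb : 0 < b) (h1 : 3*a+5*b ≤ 1)
    {r1 r2 c : ℝ} (h0 : 0 ≤ r1) (h12 : r1 < r2) (h21 : r2 ≤ 1)
    (hc1 : -1 ≤ c) (hc2 : c ≤ 1) :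
    Gfun a b r1 c < Gfun a b r2 c := by
  have h10 : r1 ≤ 1 := by linarith
  have h20 : (0:ℝ) ≤ r2 := by linarith
  have hp := phip_lt ha hb h1 h0 h12 h21
  have hm := phim_lt ha hb h1 h0 h12 h21
  have hp1 := phip_nonneg ha hb h1 h0 h10
  have hm1 := phim_nonneg ha hb h1 h0 h10
  have hA : (r1 + a*r1^3 - b*r1^5)^2 < (r2 + a*r2^3 - b*r2^5)^2 := by nlinarith
  have hB : (r1 - a*r1^3 - b*r1^5)^2 < (r2 - a*r2^3 - b*r2^5)^2 := by nlinarith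
  have h6 : r1^6 ≤ r2^6 := pow_le_pow_left₀ h0 h12.le 6
  have hC : (0:ℝ) ≤ 4*b*(1-c^2)*(r2^6-r1^6) := by
    have h1c : (0:ℝ) ≤ 1 - c^2 := by nlinarith
    have := mul_nonneg (mul_nonneg (by linarith : (0:ℝ) ≤ 4*b) h1c)
      (by linarith : (0:ℝ) ≤ r2^6-r1^6)
    linarith [this]
  have key : Gfun a b r2 c - Gfun a b r1 c
      = (1+c)/2*((r2 + a*r2^3 - b*r2^5)^2 - (r1 + a*r1^3 - b*r1^5)^2)
        + (1-c)/2*((r2 - a*r2^3 - b*r2^5)^2 - (r1 - a*r1^3 - b*r1^5)^2)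
        + 4*b*(1-c^2)*(r2^6-r1^6) := by rw [Gfun, Gfun]; ring
  set A := (r2 + a*r2^3 - b*r2^5)^2 - (r1 + a*r1^3 - b*r1^5)^2 with hAdef
  set B := (r2 - a*r2^3 - b*r2^5)^2 - (r1 - a*r1^3 - b*r1^5)^2 with hBdef
  have hA' : 0 < A := by simp [hAdef]; linarith
  have hB' : 0 < B := by simp [hBdef]; linarith
  have hsum : 0 < (1+c)/2*A + (1-c)/2*B + 4*b*(1-c^2)*(r2^6-r1^6) := by
    rcases le_total A B with h | h
    · have h' := mul_le_mul_of_nonneg_left h (by linarith : (0:ℝ) ≤ (1-c)/2)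
      linarith
    · have h' := mul_le_mul_of_nonneg_left h (by linarith : (0:ℝ) ≤ (1+c)/2)
      linarith
  linarith

lemma G_le_rho {a b : ℝ} (ha : 0 < a) (hb : 0 < b) (h1 : 3*a+5*b ≤ 1)
    {r1 r2 c : ℝ} (h0 : 0 ≤ r1) (h12 : r1 ≤ r2) (h21 : r2 ≤ 1)
    (hc1 : -1 ≤ c) (hc2 : c ≤ 1) :
    Gfun a b r1 c ≤ Gfun a b r2 c := by
  rcases eq_or_lt_of_le h12 with h | h
  · rw [h]
  · exact (G_lt ha hb h1 h0 h h21 hc1 hc2).le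

end QBS

open QBS in
/-- Proposition 4.4: for positive constants `a, b` with `3a + 5b ≤ 1` and
`ab + 4b ≤ a`, the map `f(z) = z + a z³ − b z⁵` is a conformal mapping of the unit
disk onto a bi-circularly symmetric domain. -/
theorem quintic_bicircsym (a b : ℝ) (ha : 0 < a) (hb : 0 < b)
    (h1 : 3 * a + 5 * b ≤ 1) (h2 : a * b + 4 * b ≤ a)
    (f : ℂ → ℂ) (hf : ∀ z : ℂ, f z = z + (a : ℂ) * z ^ 3 - (b : ℂ) * z ^ 5) :
    InjOn f (ball (0 : ℂ) 1) ∧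
    IsOpen (f '' ball (0 : ℂ) 1) ∧ IsConnected (f '' ball (0 : ℂ) 1) ∧
    BiCircularlySymmetric (f '' ball (0 : ℂ) 1) := by
  have h1' : 3*a+5*b ≤ 1 := by linarith
  have h2' : a*b+4*b ≤ a := by linarith
  refine ⟨?_, ?_, ?_, ?_, ?_, ?_⟩
  -- Injectivity
  · intro z hz w hw heq
    have hz' : Complex.abs z < 1 := by simpa using mem_ball_zero_iff.mp hz
    have hw' : Complex.abs w < 1 := by simpa using mem_ball_zero_iff.mp hw
    by_contra hne
    rw [hf z, hf w] at heq
    have key : (z - w) * (1 + (a:ℂ)*(z^2+z*w+w^2)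
        - (b:ℂ)*(z^4+z^3*w+z^2*w^2+z*w^3+w^4)) = 0 := by linear_combination heq
    have hzw : z - w ≠ 0 := sub_ne_zero.2 hne
    have hg := (mul_eq_zero.1 key).resolve_left hzw
    have hone : (1:ℂ) = (b:ℂ)*(z^4+z^3*w+z^2*w^2+z*w^3+w^4) - (a:ℂ)*(z^2+z*w+w^2) := by
      linear_combination hg
    set m := max (Complex.abs z) (Complex.abs w) with hm
    have hmz : Complex.abs z ≤ m := le_max_left _ _
    have hmw : Complex.abs w ≤ m := le_max_right _ _
    have hm0 : 0 ≤ m := le_trans (Complex.abs.nonneg z) hmz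
    have hm1 : m < 1 := max_lt hz' hw'
    have e2 : Complex.abs (z^2+z*w+w^2) ≤ 3*m^2 := by
      calc Complex.abs (z^2+z*w+w^2)
          ≤ Complex.abs (z^2+z*w) + Complex.abs (w^2) := Complex.abs.add_le _ _
        _ ≤ Complex.abs (z^2) + Complex.abs (z*w) + Complex.abs (w^2) := by
            linarith [Complex.abs.add_le (z^2) (z*w)]
        _ = (Complex.abs z)^2 + Complex.abs z * Complex.abs w + (Complex.abs w)^2 := by
            simp [map_mul, map_pow]
        _ ≤ 3*m^2 := by nlinarith [Complex.abs.nonneg z, Complex.abs.nonneg w]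
    have e4 : Complex.abs (z^4+z^3*w+z^2*w^2+z*w^3+w^4) ≤ 5*m^4 := by
      calc Complex.abs (z^4+z^3*w+z^2*w^2+z*w^3+w^4)
          ≤ Complex.abs (z^4+z^3*w+z^2*w^2+z*w^3) + Complex.abs (w^4) :=
            Complex.abs.add_le _ _
        _ ≤ Complex.abs (z^4+z^3*w+z^2*w^2) + Complex.abs (z*w^3) + Complex.abs (w^4) := by
            linarith [Complex.abs.add_le (z^4+z^3*w+z^2*w^2) (z*w^3)]
        _ ≤ Complex.abs (z^4+z^3*w) + Complex.abs (z^2*w^2) + Complex.abs (z*w^3)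
              + Complex.abs (w^4) := by
            linarith [Complex.abs.add_le (z^4+z^3*w) (z^2*w^2)]
        _ ≤ Complex.abs (z^4) + Complex.abs (z^3*w) + Complex.abs (z^2*w^2)
              + Complex.abs (z*w^3) + Complex.abs (w^4) := by
            linarith [Complex.abs.add_le (z^4) (z^3*w)]
        _ = (Complex.abs z)^4 + (Complex.abs z)^3 * Complex.abs w
              + (Complex.abs z)^2*(Complex.abs w)^2 + Complex.abs z * (Complex.abs w)^3
              + (Complex.abs w)^4 := by simp [map_mul, map_pow]
        _ ≤ 5*m^4 := by
            have h0z := Complex.abs.nonneg z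
            have h0w := Complex.abs.nonneg w
            have b1 : (Complex.abs z)^4 ≤ m^4 := pow_le_pow_left₀ h0z hmz 4
            have b5 : (Complex.abs w)^4 ≤ m^4 := pow_le_pow_left₀ h0w hmw 4
            have b2 : (Complex.abs z)^3*(Complex.abs w) ≤ m^3*m :=
              mul_le_mul (pow_le_pow_left₀ h0z hmz 3) hmw h0w (by positivity)
            have b3 : (Complex.abs z)^2*(Complex.abs w)^2 ≤ m^2*m^2 :=
              mul_le_mul (pow_le_pow_left₀ h0z hmz 2) (pow_le_pow_left₀ h0w hmw 2)
                (by positivity) (by positivity)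
            have b4 : (Complex.abs z)*(Complex.abs w)^3 ≤ m*m^3 :=
              mul_le_mul hmz (pow_le_pow_left₀ h0w hmw 3) (by positivity) hm0
            nlinarith [b1, b2, b3, b4, b5]
    have habs1 : (1:ℝ) ≤ b*(5*m^4) + a*(3*m^2) := by
      have h0 : (1:ℝ) = Complex.abs ((b:ℂ)*(z^4+z^3*w+z^2*w^2+z*w^3+w^4)
          - (a:ℂ)*(z^2+z*w+w^2)) := by rw [← hone]; simp
      have htri : Complex.abs ((b:ℂ)*(z^4+z^3*w+z^2*w^2+z*w^3+w^4)
          - (a:ℂ)*(z^2+z*w+w^2))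
          ≤ Complex.abs ((b:ℂ)*(z^4+z^3*w+z^2*w^2+z*w^3+w^4))
            + Complex.abs ((a:ℂ)*(z^2+z*w+w^2)) := by
        exact abs_sub_le' _ _
      have hb' : Complex.abs ((b:ℂ)*(z^4+z^3*w+z^2*w^2+z*w^3+w^4)) ≤ b*(5*m^4) := by
        rw [map_mul, Complex.abs_ofReal, abs_of_pos hb]
        exact mul_le_mul_of_nonneg_left e4 hb.le
      have ha' : Complex.abs ((a:ℂ)*(z^2+z*w+w^2)) ≤ a*(3*m^2) := by
        rw [map_mul, Complex.abs_ofReal, abs_of_pos ha]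
        exact mul_le_mul_of_nonneg_left e2 ha.le
      linarith [h0.le, htri, hb', ha']
    have hm2 : m^2 < 1 := by nlinarith
    have hm4 : m^4 ≤ m^2 := by nlinarith [sq_nonneg m, sq_nonneg (m^2)]
    nlinarith [mul_nonneg hb.le (by linarith : (0:ℝ) ≤ m^2 - m^4),
      mul_nonneg (by linarith : (0:ℝ) ≤ 1-(3*a+5*b)) (sq_nonneg m)]
  -- Openness
  · rw [isOpen_iff_mem_nhds]
    rintro w ⟨z, hz, rfl⟩
    have hz' : Complex.abs z < 1 := by simpa using mem_ball_zero_iff.mp hz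
    have hpoly : HasStrictDerivAt (fun w : ℂ => w + (a:ℂ)*w^3 - (b:ℂ)*w^5)
        (1 + 3*(a:ℂ)*z^2 - 5*(b:ℂ)*z^4) z := by
      have h3 := (hasStrictDerivAt_pow 3 z).const_mul (a:ℂ)
      have h5 := (hasStrictDerivAt_pow 5 z).const_mul (b:ℂ)
      have := ((hasStrictDerivAt_id z).add h3).sub h5
      refine this.congr_deriv ?_
      simp only [show (3:ℕ)-1 = 2 from rfl, show (5:ℕ)-1 = 4 from rfl]
      push_cast
      ring
    have hfd : HasStrictDerivAt f (1 + 3*(a:ℂ)*z^2 - 5*(b:ℂ)*z^4) z := by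
      have hfun : f = fun w : ℂ => w + (a:ℂ)*w^3 - (b:ℂ)*w^5 := funext hf
      rw [hfun]; exact hpoly
    have hne : (1 + 3*(a:ℂ)*z^2 - 5*(b:ℂ)*z^4) ≠ 0 := by
      intro h
      have hone : (1:ℂ) = 5*(b:ℂ)*z^4 - 3*(a:ℂ)*z^2 := by linear_combination h
      have htri : Complex.abs ((5:ℂ)*(b:ℂ)*z^4 - 3*(a:ℂ)*z^2)
          ≤ 5*b*(Complex.abs z)^4 + 3*a*(Complex.abs z)^2 := by
        calc Complex.abs ((5:ℂ)*(b:ℂ)*z^4 - 3*(a:ℂ)*z^2)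
            ≤ Complex.abs ((5:ℂ)*(b:ℂ)*z^4) + Complex.abs ((3:ℂ)*(a:ℂ)*z^2) := by
              exact abs_sub_le' _ _
          _ = 5*b*(Complex.abs z)^4 + 3*a*(Complex.abs z)^2 := by
              simp [map_mul, map_pow, Complex.abs_ofReal, abs_of_pos ha, abs_of_pos hb]
      have h1le : (1:ℝ) ≤ 5*b*(Complex.abs z)^4 + 3*a*(Complex.abs z)^2 := by
        calc (1:ℝ) = Complex.abs ((5:ℂ)*(b:ℂ)*z^4 - 3*(a:ℂ)*z^2) := by
              rw [← hone]; simp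
          _ ≤ _ := htri
      have h0z : 0 ≤ Complex.abs z := Complex.abs.nonneg z
      have hz2 : (Complex.abs z)^2 < 1 := by nlinarith
      have hz4 : (Complex.abs z)^4 ≤ (Complex.abs z)^2 := by nlinarith
      nlinarith [mul_nonneg hb.le (by linarith : (0:ℝ) ≤ (Complex.abs z)^2 - (Complex.abs z)^4),
        mul_nonneg (by linarith : (0:ℝ) ≤ 1-(3*a+5*b)) (sq_nonneg (Complex.abs z))]
    rw [← hfd.map_nhds_eq hne]
    exact Filter.image_mem_map (isOpen_ball.mem_nhds hz)
  -- Connectedness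
  · have hcf : Continuous f := by
      have hfun : f = fun w : ℂ => w + (a:ℂ)*w^3 - (b:ℂ)*w^5 := funext hf
      rw [hfun]; continuity
    refine ⟨⟨f 0, ⟨0, by simp, rfl⟩⟩, ?_⟩
    exact ((convex_ball (0:ℂ) 1).isPreconnected).image f hcf.continuousOn
  -- symmetry: negation
  · rintro w ⟨z, hz, rfl⟩
    refine ⟨-z, by simpa using hz, ?_⟩
    rw [hf, hf]; ring
  -- symmetry: conjugation
  · rintro w ⟨z, hz, rfl⟩
    refine ⟨starRingEnd ℂ z, by simpa using hz, ?_⟩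
    rw [hf, hf]
    simp [map_add, map_sub, map_mul, map_pow, Complex.conj_ofReal]
  -- the circular-rearrangement property
  · rintro r θ θ' hr hθ'0 hθ'θ hθπ ⟨z₀, hz₀, hfz₀⟩
    have hπ := Real.pi_pos
    have hθ0 : 0 ≤ θ := le_trans hθ'0 hθ'θ
    have hz₀abs : Complex.abs z₀ < 1 := by simpa using mem_ball_zero_iff.mp hz₀
    rw [hf z₀] at hfz₀
    have htre : ((r:ℂ) * Complex.exp ((θ:ℂ) * I)).re = r * Real.cos θ := by
      simp [Complex.exp_mul_I, Complex.mul_re, Complex.cos_ofReal_re, Complex.sin_ofReal_re]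
    have htim : ((r:ℂ) * Complex.exp ((θ:ℂ) * I)).im = r * Real.sin θ := by
      simp [Complex.exp_mul_I, Complex.mul_im, Complex.cos_ofReal_re, Complex.sin_ofReal_re]
    have hsq : z₀.re^2 + z₀.im^2 < 1 := by
      have h := Complex.normSq_eq_abs z₀
      rw [Complex.normSq_apply] at h
      nlinarith [Complex.abs.nonneg z₀]
    have hP := P_pos ha hb h1' (x := z₀.re) (y := z₀.im) hsq
    have hQ := Q_pos ha hb h1' (x := z₀.re) (y := z₀.im) hsq
    have hre0 : 0 ≤ z₀.re := by
      have hcos : 0 ≤ Real.cos θ := Real.cos_nonneg_of_mem_Icc ⟨by linarith, hθπ⟩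
      have he : z₀.re * (1 + a*(z₀.re^2 - 3*z₀.im^2)
          - b*(z₀.re^4 - 10*z₀.re^2*z₀.im^2 + 5*z₀.im^4)) = r * Real.cos θ := by
        rw [← f_re a b z₀, hfz₀, htre]
      by_contra hneg
      nlinarith [mul_pos (neg_pos.2 (lt_of_not_ge hneg)) hP, mul_nonneg hr.le hcos]
    have him0 : 0 ≤ z₀.im := by
      have hsin : 0 ≤ Real.sin θ := Real.sin_nonneg_of_nonneg_of_le_pi hθ0 (by linarith)
      have he : z₀.im * (1 + a*(3*z₀.re^2 - z₀.im^2)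
          - b*(5*z₀.re^4 - 10*z₀.re^2*z₀.im^2 + z₀.im^4)) = r * Real.sin θ := by
        rw [← f_im a b z₀, hfz₀, htim]
      by_contra hneg
      nlinarith [mul_pos (neg_pos.2 (lt_of_not_ge hneg)) hQ, mul_nonneg hr.le hsin]
    have hz₀ne : z₀ ≠ 0 := by
      rintro rfl
      rw [show (0:ℂ) + (a:ℂ)*0^3 - (b:ℂ)*0^5 = 0 by ring] at hfz₀
      have habs0 : Complex.abs ((r:ℂ) * Complex.exp ((θ:ℂ)*I)) = 0 := by
        rw [← hfz₀]; simp
      rw [map_mul, Complex.abs_ofReal, Complex.abs_exp_ofReal_mul_I, mul_one,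
        abs_of_pos hr] at habs0
      exact hr.ne' habs0
    set ρ₀ := Complex.abs z₀ with hρ₀def
    set t₀ := Complex.arg z₀ with ht₀def
    have hρ₀pos : 0 < ρ₀ := Complex.abs.pos hz₀ne
    have hρ₀lt1 : ρ₀ < 1 := hz₀abs
    have ht₀0 : 0 ≤ t₀ := Complex.arg_nonneg_iff.2 him0
    have ht₀π : t₀ ≤ Real.pi/2 := Complex.arg_le_pi_div_two_iff.2 (Or.inl hre0)
    have hz₀eq : (ρ₀:ℂ) * Complex.exp ((t₀:ℂ) * I) = z₀ := Complex.abs_mul_exp_arg_mul_I z₀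
    have hrsq : Complex.normSq ((r:ℂ) * Complex.exp ((θ:ℂ)*I)) = r^2 := by
      rw [Complex.normSq_eq_abs]
      simp [map_mul, Complex.abs_exp_ofReal_mul_I, abs_of_pos hr]
    have hr2 : Gfun a b ρ₀ (Real.cos (2*t₀)) = r^2 := by
      rw [← normSq_f_polar a b ρ₀ t₀, hz₀eq, hfz₀]
      exact hrsq
    have hGcont : ∀ c : ℝ, Continuous fun ρ : ℝ => Gfun a b ρ c := by
      intro c; unfold Gfun; continuity
    have hGcont_s : ∀ u : ℝ, Continuous fun s : ℝ => Gfun a b u (Real.cos (2*s)) := by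
      intro u; unfold Gfun; continuity
    have hG0 : ∀ c : ℝ, Gfun a b 0 c = 0 := by intro c; unfold Gfun; ring
    have hGρ₀ : ∀ s, 0 ≤ s → s ≤ t₀ → r^2 ≤ Gfun a b ρ₀ (Real.cos (2*s)) := by
      intro s hs0 hst
      rw [← hr2]
      exact G_le_c ha hb h2' hρ₀pos.le hρ₀lt1.le (Real.neg_one_le_cos _)
        (Real.cos_le_cos_of_nonneg_of_le_pi (by linarith) (by linarith) (by linarith))
        (Real.cos_le_one _)
    have hexen : ∀ s : ℝ, ∃ ρ : ℝ, (0 ≤ s ∧ s ≤ t₀) →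
        (ρ ∈ Icc (0:ℝ) ρ₀ ∧ Gfun a b ρ (Real.cos (2*s)) = r^2) := by
      intro s
      by_cases hcase : 0 ≤ s ∧ s ≤ t₀
      · have hsub := intermediate_value_Icc hρ₀pos.le
          ((hGcont (Real.cos (2*s))).continuousOn)
        have hmem : r^2 ∈ Icc (Gfun a b 0 (Real.cos (2*s))) (Gfun a b ρ₀ (Real.cos (2*s))) := by
          constructor
          · rw [hG0]; positivity
          · exact hGρ₀ s hcase.1 hcase.2
        obtain ⟨ρ, hρmem, hρval⟩ := hsub hmem
        exact ⟨ρ, fun _ => ⟨hρmem, hρval⟩⟩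
      · exact ⟨0, fun hh => absurd hh hcase⟩
    choose ρf hρf using hexen
    have hρfmem : ∀ s, 0 ≤ s → s ≤ t₀ → ρf s ∈ Icc (0:ℝ) ρ₀ := fun s h h' => (hρf s ⟨h, h'⟩).1
    have hρfval : ∀ s, 0 ≤ s → s ≤ t₀ → Gfun a b (ρf s) (Real.cos (2*s)) = r^2 :=
      fun s h h' => (hρf s ⟨h, h'⟩).2
    have huniq : ∀ c ρ₁ ρ₂ : ℝ, -1 ≤ c → c ≤ 1 → ρ₁ ∈ Icc (0:ℝ) ρ₀ → ρ₂ ∈ Icc (0:ℝ) ρ₀ →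
        Gfun a b ρ₁ c = Gfun a b ρ₂ c → ρ₁ = ρ₂ := by
      intro c ρ₁ ρ₂ hc1 hc2 hm1 hm2 he
      by_contra hne
      rcases lt_or_gt_of_ne hne with h | h
      · exact absurd he (ne_of_lt (G_lt ha hb h1' hm1.1 h (hm2.2.trans hρ₀lt1.le) hc1 hc2))
      · exact absurd he.symm (ne_of_lt (G_lt ha hb h1' hm2.1 h (hm1.2.trans hρ₀lt1.le) hc1 hc2))
    have hρft₀ : ρf t₀ = ρ₀ := by
      apply huniq (Real.cos (2*t₀)) _ _ (Real.neg_one_le_cos _) (Real.cos_le_one _)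
        (hρfmem t₀ ht₀0 le_rfl) ⟨hρ₀pos.le, le_rfl⟩
      rw [hρfval t₀ ht₀0 le_rfl, hr2]
    have hρfcont : ContinuousOn ρf (Icc 0 t₀) := by
      intro s hs
      rw [Metric.continuousWithinAt_iff]
      intro ε hε
      have hsm := hρfmem s hs.1 hs.2
      have hsv := hρfval s hs.1 hs.2
      have hupper : ∃ δ > 0, ∀ s' ∈ Icc (0:ℝ) t₀, |s' - s| < δ → ρf s' < ρf s + ε := by
        by_cases hcase : ρf s + ε ≤ ρ₀
        · have hu1 : r^2 < Gfun a b (ρf s + ε) (Real.cos (2*s)) := by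
            rw [← hsv]
            exact G_lt ha hb h1' hsm.1 (by linarith) (by linarith)
              (Real.neg_one_le_cos _) (Real.cos_le_one _)
          have hopen : IsOpen {x : ℝ | r^2 < Gfun a b (ρf s + ε) (Real.cos (2*x))} :=
            isOpen_lt continuous_const (hGcont_s _)
          obtain ⟨δ, hδ0, hball⟩ := Metric.isOpen_iff.1 hopen s hu1
          refine ⟨δ, hδ0, fun s' hs' hd => ?_⟩
          have hin : r^2 < Gfun a b (ρf s + ε) (Real.cos (2*s')) := hball (by
            rw [mem_ball, Real.dist_eq]; exact hd)
          by_contra hge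
          push_neg at hge
          have hmono : Gfun a b (ρf s + ε) (Real.cos (2*s'))
              ≤ Gfun a b (ρf s') (Real.cos (2*s')) :=
            G_le_rho ha hb h1' (by linarith [hsm.1, hε.le]) hge
              ((hρfmem s' hs'.1 hs'.2).2.trans hρ₀lt1.le)
              (Real.neg_one_le_cos _) (Real.cos_le_one _)
          rw [hρfval s' hs'.1 hs'.2] at hmono
          linarith
        · exact ⟨1, one_pos, fun s' hs' _ =>
            lt_of_le_of_lt ((hρfmem s' hs'.1 hs'.2).2) (by linarith [lt_of_not_ge hcase])⟩
      have hlower : ∃ δ > 0, ∀ s' ∈ Icc (0:ℝ) t₀, |s' - s| < δ → ρf s - ε < ρf s' := by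
        by_cases hcase : 0 ≤ ρf s - ε
        · have hu1 : Gfun a b (ρf s - ε) (Real.cos (2*s)) < r^2 := by
            rw [← hsv]
            exact G_lt ha hb h1' hcase (by linarith) (hsm.2.trans hρ₀lt1.le)
              (Real.neg_one_le_cos _) (Real.cos_le_one _)
          have hopen : IsOpen {x : ℝ | Gfun a b (ρf s - ε) (Real.cos (2*x)) < r^2} :=
            isOpen_lt (hGcont_s _) continuous_const
          obtain ⟨δ, hδ0, hball⟩ := Metric.isOpen_iff.1 hopen s hu1
          refine ⟨δ, hδ0, fun s' hs' hd => ?_⟩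
          have hin : Gfun a b (ρf s - ε) (Real.cos (2*s')) < r^2 := hball (by
            rw [mem_ball, Real.dist_eq]; exact hd)
          by_contra hge
          push_neg at hge
          have hmono : Gfun a b (ρf s') (Real.cos (2*s'))
              ≤ Gfun a b (ρf s - ε) (Real.cos (2*s')) :=
            G_le_rho ha hb h1' (hρfmem s' hs'.1 hs'.2).1 hge
              (by linarith [hsm.2]) (Real.neg_one_le_cos _) (Real.cos_le_one _)
          rw [hρfval s' hs'.1 hs'.2] at hmono
          linarith
        · exact ⟨1, one_pos, fun s' hs' _ =>
            lt_of_lt_of_le (by linarith [lt_of_not_ge hcase]) (hρfmem s' hs'.1 hs'.2).1⟩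
      obtain ⟨δ₁, hδ₁, hup⟩ := hupper
      obtain ⟨δ₂, hδ₂, hlo⟩ := hlower
      refine ⟨min δ₁ δ₂, lt_min hδ₁ hδ₂, fun s' hs' hd => ?_⟩
      rw [Real.dist_eq] at hd ⊢
      have hd1 : |s' - s| < δ₁ := lt_of_lt_of_le hd (min_le_left _ _)
      have hd2 : |s' - s| < δ₂ := lt_of_lt_of_le hd (min_le_right _ _)
      exact abs_lt.2 ⟨by linarith [hlo s' hs' hd2], by linarith [hup s' hs' hd1]⟩
    set pz : ℝ → ℂ := fun s => ((ρf s : ℝ) : ℂ) * Complex.exp ((s:ℂ) * I) with hpz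
    set wfn : ℝ → ℂ := fun s => pz s + (a:ℂ)*(pz s)^3 - (b:ℂ)*(pz s)^5 with hwfn
    have hwnormSq : ∀ s, 0 ≤ s → s ≤ t₀ → Complex.normSq (wfn s) = r^2 := by
      intro s h h'
      simp only [hwfn, hpz]
      exact (normSq_f_polar a b (ρf s) s).trans (hρfval s h h')
    have hwabs : ∀ s, 0 ≤ s → s ≤ t₀ → Complex.abs (wfn s) = r := by
      intro s h h'
      rw [Complex.abs_apply, hwnormSq s h h', Real.sqrt_sq hr.le]
    have hpzabs : ∀ s, 0 ≤ s → s ≤ t₀ → Complex.abs (pz s) = ρf s := by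
      intro s h h'
      simp [hpz, Complex.abs_exp_ofReal_mul_I, _root_.abs_of_nonneg (hρfmem s h h').1]
    have hasq : ∀ s, 0 ≤ s → s ≤ t₀ → (pz s).re^2 + (pz s).im^2 < 1 := by
      intro s h h'
      have h1'' := hpzabs s h h'
      have h2'' := Complex.normSq_eq_abs (pz s)
      rw [Complex.normSq_apply, h1''] at h2''
      have := (hρfmem s h h').2
      have := (hρfmem s h h').1
      nlinarith
    have hre_pz : ∀ s ∈ Icc (0:ℝ) t₀, 0 ≤ (pz s).re := by
      intro s hs
      have hcos : 0 ≤ Real.cos s :=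
        Real.cos_nonneg_of_mem_Icc ⟨by linarith [hs.1], by linarith [hs.2, ht₀π]⟩
      have : (pz s).re = ρf s * Real.cos s := by
        simp [hpz, Complex.exp_mul_I, Complex.mul_re, Complex.cos_ofReal_re,
          Complex.sin_ofReal_re]
      rw [this]
      exact mul_nonneg (hρfmem s hs.1 hs.2).1 hcos
    have hwre : ∀ s ∈ Icc (0:ℝ) t₀, 0 ≤ (wfn s).re := by
      intro s hs
      simp only [hwfn]
      rw [f_re]
      exact mul_nonneg (hre_pz s hs) (P_pos ha hb h1' (hasq s hs.1 hs.2)).le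
    have hslit : ∀ s ∈ Icc (0:ℝ) t₀, wfn s ∈ Complex.slitPlane := by
      intro s hs
      rw [Complex.mem_slitPlane_iff]
      rcases eq_or_lt_of_le (hwre s hs) with h | h
      · right
        intro him
        have h2'' := hwnormSq s hs.1 hs.2
        rw [Complex.normSq_apply, ← h, him] at h2''
        simp at h2''
        nlinarith
      · left; exact h
    have hwcont : ContinuousOn wfn (Icc (0:ℝ) t₀) := by
      have hexp : Continuous fun s : ℝ => Complex.exp ((s:ℂ)*I) :=
        Complex.continuous_exp.comp (Complex.continuous_ofReal.mul continuous_const)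
      have hpzc : ContinuousOn pz (Icc (0:ℝ) t₀) := by
        rw [hpz]
        exact (Complex.continuous_ofReal.comp_continuousOn hρfcont).mul hexp.continuousOn
      rw [hwfn]
      exact (hpzc.add (continuousOn_const.mul (hpzc.pow 3))).sub
        (continuousOn_const.mul (hpzc.pow 5))
    have hargcont : ContinuousOn (fun s => Complex.arg (wfn s)) (Icc (0:ℝ) t₀) := fun s hs =>
      (Complex.continuousAt_arg (hslit s hs)).comp_continuousWithinAt (hwcont s hs)
    have harg0 : Complex.arg (wfn 0) = 0 := by
      rw [Complex.arg_eq_zero_iff]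
      refine ⟨hwre 0 ⟨le_rfl, ht₀0⟩, ?_⟩
      have him : (pz 0).im = 0 := by
        simp [hpz, Complex.exp_mul_I, Complex.mul_im, Complex.cos_ofReal_re,
          Complex.sin_ofReal_re]
      simp only [hwfn]
      rw [f_im, him, zero_mul]
    have hargt₀ : Complex.arg (wfn t₀) = θ := by
      have hwt₀ : wfn t₀ = (r:ℂ) * Complex.exp ((θ:ℂ)*I) := by
        simp only [hwfn, hpz]
        rw [hρft₀, hz₀eq]
        exact hfz₀
      rw [hwt₀, Complex.exp_mul_I, Complex.arg_real_mul _ hr]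
      exact Complex.arg_cos_add_sin_mul_I (θ := θ) ⟨by linarith, by linarith⟩
    have hIVT := intermediate_value_Icc ht₀0 hargcont
    have hθ'mem : θ' ∈ Icc (Complex.arg (wfn 0)) (Complex.arg (wfn t₀)) := by
      rw [harg0, hargt₀]; exact ⟨hθ'0, hθ'θ⟩
    obtain ⟨sst, hsstmem, hsstval⟩ := hIVT hθ'mem
    simp only at hsstval
    refine ⟨pz sst, ?_, ?_⟩
    · rw [mem_ball_zero_iff, Complex.norm_eq_abs, hpzabs sst hsstmem.1 hsstmem.2]
      exact lt_of_le_of_lt (hρfmem sst hsstmem.1 hsstmem.2).2 hρ₀lt1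
    · rw [hf]
      have hwe : pz sst + (a:ℂ)*(pz sst)^3 - (b:ℂ)*(pz sst)^5 = wfn sst := by
        rw [hwfn]
      rw [hwe]
      conv_lhs => rw [← Complex.abs_mul_exp_arg_mul_I (wfn sst)]
      rw [hwabs sst hsstmem.1 hsstmem.2, hsstval]
end

section
/- Let B be a 2×2 complex matrix and let x ∈ ℂ² be a unit vector on which B attains its operator norm, i.e. ‖x‖ = 1 and ‖Bx‖ = ‖B‖. If ⟨Bx, x⟩ = 0, then the trace of B is 0. -/
open Complex Metric Set

lemma real_key (n A C : ℝ) (hn : 0 < n) (hC : 0 < C)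
    (h : (n⁻¹ * C * A) ^ 2 + (n + n⁻¹ * C ^ 2) ^ 2 ≤ n ^ 2 * (1 + (n⁻¹ * C) ^ 2)) :
    False := by
  have hne : n ≠ 0 := hn.ne'
  have e1 : (n + n⁻¹ * C ^ 2) ^ 2 = n ^ 2 + 2 * C ^ 2 + (n⁻¹ * C ^ 2) ^ 2 := by
    field_simp; ring
  have e2 : n ^ 2 * (1 + (n⁻¹ * C) ^ 2) = n ^ 2 + C ^ 2 := by field_simp
  nlinarith [sq_nonneg (n⁻¹ * C * A), sq_nonneg (n⁻¹ * C ^ 2)]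

-- norm of orthonormal combination
lemma norm_sq_comb {x y : EuclideanSpace ℂ (Fin 2)} (hx : ‖x‖ = 1) (hy : ‖y‖ = 1)
    (hxy : inner (𝕜 := ℂ) x y = 0) (α β : ℂ) :
    ‖α • x + β • y‖ ^ 2 = ‖α‖ ^ 2 + ‖β‖ ^ 2 := by
  have h : inner (𝕜 := ℂ) (α • x) (β • y) = 0 := by
    rw [inner_smul_left, inner_smul_right, hxy]; ring
  rw [norm_add_sq (𝕜 := ℂ), h, norm_smul, norm_smul, hx, hy]
  simp

-- trace via orthonormal basis
lemma trace_eq_inner_sum (B : Matrix (Fin 2) (Fin 2) ℂ)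
    (e : OrthonormalBasis (Fin 2) ℂ (EuclideanSpace ℂ (Fin 2))) :
    Matrix.trace B = ∑ i, inner (𝕜 := ℂ) (e i) (Matrix.toEuclideanCLM (𝕜 := ℂ) B (e i)) := by
  have h1 : Matrix.trace B
      = LinearMap.trace ℂ _ (Matrix.toEuclideanLin (𝕜 := ℂ) B) := by
    rw [Matrix.toEuclideanLin_eq_toLin,
      LinearMap.trace_eq_matrix_trace ℂ (PiLp.basisFun 2 ℂ (Fin 2)),
      LinearMap.toMatrix_toLin]
  rw [h1, LinearMap.trace_eq_matrix_trace ℂ e.toBasis, Matrix.trace]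
  congr 1
  ext i
  rw [Matrix.diag_apply, LinearMap.toMatrix_apply, e.coe_toBasis_repr_apply,
    e.repr_apply_apply, e.coe_toBasis, ← Matrix.coe_toEuclideanCLM_eq_toEuclideanLin]
  rfl

/-- If a `2×2` complex matrix `B` attains its (Euclidean) operator norm at a unit
vector `x` and `⟨Bx, x⟩ = 0`, then `tr B = 0`. (In Mathlib's convention the inner
product is conjugate-linear in the first slot, so `⟨Bx, x⟩ = ⟪x, Bx⟫`.) -/
theorem trace_zero_of_norm_attained_orthogonal (B : Matrix (Fin 2) (Fin 2) ℂ)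
    (x : EuclideanSpace ℂ (Fin 2)) (hx : ‖x‖ = 1)
    (hattain : ‖Matrix.toEuclideanCLM (𝕜 := ℂ) B x‖ = ‖Matrix.toEuclideanCLM (𝕜 := ℂ) B‖)
    (horth : inner (𝕜 := ℂ) x (Matrix.toEuclideanCLM (𝕜 := ℂ) B x) = (0 : ℂ)) :
    Matrix.trace B = 0 := by
  set T := Matrix.toEuclideanCLM (𝕜 := ℂ) B with hT
  by_cases h0 : T x = 0
  · -- then ‖T‖ = 0 so T = 0 so B = 0
    have hTn : ‖T‖ = 0 := by rw [← hattain, h0, norm_zero]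
    have hT0 : T = 0 := by rwa [norm_eq_zero] at hTn
    have hB0 : B = 0 := by
      have h2 := congrArg (Matrix.toEuclideanCLM (n := Fin 2) (𝕜 := ℂ)).symm
        (hT.symm.trans hT0)
      rwa [StarAlgEquiv.symm_apply_apply, map_zero] at h2
    simp [hB0]
  · set n : ℝ := ‖T x‖ with hn
    have hnpos : 0 < n := norm_pos_iff.mpr h0
    set y : EuclideanSpace ℂ (Fin 2) := ((n : ℂ)⁻¹) • T x with hy
    have hny : ‖y‖ = 1 := by
      rw [hy, norm_smul]
      simp [hn]
      field_simp
    have hxy : inner (𝕜 := ℂ) x y = 0 := by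
      rw [hy, inner_smul_right, horth, mul_zero]
    have hTx : T x = (n : ℂ) • y := by
      rw [hy, smul_smul]
      rw [mul_inv_cancel₀ (by exact_mod_cast hnpos.ne')]
      simp
    -- orthonormal basis from x, y
    have hyx : inner (𝕜 := ℂ) y x = 0 := by
      rw [← inner_conj_symm, hxy, map_zero]
    have hon : Orthonormal ℂ ![x, y] := by
      rw [orthonormal_iff_ite]
      intro i j
      fin_cases i <;> fin_cases j <;>
        simp [inner_self_eq_norm_sq_to_K, hx, hny, hxy, hyx]
    have hcard : Fintype.card (Fin 2) = Module.finrank ℂ (EuclideanSpace ℂ (Fin 2)) := by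
      simp [finrank_euclideanSpace_fin]
    let b0 := basisOfOrthonormalOfCardEqFinrank hon hcard
    have hb0 : ⇑b0 = ![x, y] := coe_basisOfOrthonormalOfCardEqFinrank hon hcard
    let e : OrthonormalBasis (Fin 2) ℂ (EuclideanSpace ℂ (Fin 2)) :=
      b0.toOrthonormalBasis (by rwa [hb0])
    have he : ⇑e = ![x, y] := by
      rw [show ⇑e = ⇑b0 from Module.Basis.coe_toOrthonormalBasis _ _, hb0]
    set a : ℂ := inner (𝕜 := ℂ) x (T y) with ha
    set b : ℂ := inner (𝕜 := ℂ) y (T y) with hb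
    have hTy : T y = a • x + b • y := by
      have hsr := e.sum_repr' (T y)
      rw [Fin.sum_univ_two] at hsr
      have h0' : e 0 = x := by rw [he]; rfl
      have h1' : e 1 = y := by rw [he]; rfl
      rw [h0', h1', ← ha, ← hb] at hsr
      exact hsr.symm
    -- key inequality at t = n⁻¹ * conj b
    have hbz : b = 0 := by
      by_contra hbne
      set t : ℂ := (n : ℂ)⁻¹ * (starRingEnd ℂ) b with ht
      have hTz : T (x + t • y) = (t * a) • x + ((n : ℂ) + t * b) • y := by
        rw [map_add, map_smul, hTx, hTy]
        module
      have hineq : ‖T (x + t • y)‖ ≤ ‖T‖ * ‖x + t • y‖ := T.le_opNorm _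
      rw [← hattain] at hineq
      have hsq : ‖T (x + t • y)‖ ^ 2 ≤ n ^ 2 * ‖x + t • y‖ ^ 2 := by
        have h1 : (0:ℝ) ≤ n * ‖x + t • y‖ := by positivity
        nlinarith [norm_nonneg (T (x + t • y))]
      rw [hTz, norm_sq_comb hx hny hxy] at hsq
      have hz2 : ‖x + t • y‖ ^ 2 = 1 + ‖t‖ ^ 2 := by
        have := norm_sq_comb hx hny hxy 1 t
        simpa using this
      rw [hz2] at hsq
      -- compute norms
      have htb : t * b = ((n : ℝ)⁻¹ * ‖b‖ ^ 2 : ℝ) := by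
        rw [ht]
        push_cast
        rw [mul_assoc, Complex.conj_mul']
      have hnb : ‖(n : ℂ) + t * b‖ = n + n⁻¹ * ‖b‖ ^ 2 := by
        rw [htb, ← Complex.ofReal_add, Complex.norm_real,
          Real.norm_of_nonneg (by positivity)]
      have htn : ‖t‖ = n⁻¹ * ‖b‖ := by
        rw [ht, norm_mul, norm_inv, Complex.norm_real,
          Real.norm_of_nonneg hnpos.le, RCLike.norm_conj]
      rw [norm_mul, hnb, htn] at hsq
      have hb2 : 0 < ‖b‖ := norm_pos_iff.mpr hbne
      exact real_key n ‖a‖ ‖b‖ hnpos hb2 hsq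
    rw [trace_eq_inner_sum B e, Fin.sum_univ_two, he]
    simp only [Matrix.cons_val_zero, Matrix.cons_val_one, Matrix.head_cons]
    rw [← hT, horth, ← hb, hbz, add_zero]
end
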